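/- arXiv:2305.02373 — 5 statements merged into one kernel-verified Lean document; each statement's English description precedes it below -/
import Mathlib

section
/- Let T and C be independent nonnegative random variables, Δ = 1{T ≤ C}, T̃ = min(T,C), and G(t) = P(C > t). Assume C has a continuous distribution (so G(t−) = G(t)) and G(τ) > 0 for fixed τ. Then E[ Δ(τ) · min(T̃, τ) / G(min(T̃, τ) ∧ T) ] = E[min(T, τ)], where Δ(τ) = 1{C > min(τ, T)}. -/
open MeasureTheory

/-- IPCW identity: E[Δ(τ)·min(T̃,τ)/G(min(T̃,τ))] = E[min(T,τ)],
    with Δ(τ) = 1{C > min(T,τ)}, for continuous censoring distribution. -/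
theorem stmt4
    {Ω : Type*} [MeasurableSpace Ω] (μ : Measure Ω) [IsProbabilityMeasure μ]
    (T C : Ω → ℝ) (hTm : Measurable T) (hCm : Measurable C)
    (hT0 : ∀ ω, 0 ≤ T ω) (hC0 : ∀ ω, 0 ≤ C ω)
    (hInd : ProbabilityTheory.IndepFun T C μ)
    (hCcont : ∀ t : ℝ, μ {ω | C ω = t} = 0)
    (G : ℝ → ℝ) (hG : ∀ s, G s = (μ {ω | s < C ω}).toReal)
    (τ : ℝ) (hτ : 0 < τ) (hGτ : 0 < G τ)
    (hInt : Integrable (fun ω => min (T ω) τ) μ) :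
    ∫ ω, (if min (T ω) τ < C ω then
        min (min (T ω) (C ω)) τ / G (min (min (T ω) (C ω)) τ) else 0) ∂μ
      = ∫ ω, min (T ω) τ ∂μ := by
  set ν := μ.map T with hν
  set κ := μ.map C with hκ
  have hνprob : IsProbabilityMeasure ν := Measure.isProbabilityMeasure_map hTm.aemeasurable
  have hκprob : IsProbabilityMeasure κ := Measure.isProbabilityMeasure_map hCm.aemeasurable
  -- G in terms of κ
  have hGκ : ∀ s, G s = (κ (Set.Ioi s)).toReal := by
    intro s
    rw [hG, hκ, Measure.map_apply hCm measurableSet_Ioi]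
    rfl
  -- G is antitone
  have hGanti : Antitone G := by
    intro a b hab
    rw [hGκ, hGκ]
    exact ENNReal.toReal_mono (measure_ne_top κ _)
      (measure_mono (Set.Ioi_subset_Ioi hab))
  have hGmin : ∀ t : ℝ, 0 < G (min t τ) := fun t =>
    lt_of_lt_of_le hGτ (hGanti (min_le_right t τ))
  have hGm : Measurable G := hGanti.measurable
  -- the product-space function
  set F : ℝ × ℝ → ℝ := fun p =>
    if min p.1 τ < p.2 then min p.1 τ / G (min p.1 τ) else 0 with hF
  have hsetm : MeasurableSet {p : ℝ × ℝ | min p.1 τ < p.2} :=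
    measurableSet_lt ((measurable_fst.min measurable_const)) measurable_snd
  have hfm : Measurable (fun t : ℝ => min t τ / G (min t τ)) :=
    (measurable_id.min measurable_const).div
      (hGm.comp (measurable_id.min measurable_const))
  have hFm : Measurable F := Measurable.ite hsetm (hfm.comp measurable_fst) measurable_const
  -- pointwise identification of the integrand
  have hpt : ∀ ω, (if min (T ω) τ < C ω then
      min (min (T ω) (C ω)) τ / G (min (min (T ω) (C ω)) τ) else 0) = F (T ω, C ω) := by
    intro ω
    simp only [hF]
    by_cases h : min (T ω) τ < C ω
    · have hmm : min (min (T ω) (C ω)) τ = min (T ω) τ := by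
        rw [min_right_comm, min_eq_left h.le]
      rw [if_pos h, if_pos h, hmm]
    · rw [if_neg h, if_neg h]
  -- joint law is product law
  have hmap : μ.map (fun ω => (T ω, C ω)) = ν.prod κ :=
    (ProbabilityTheory.indepFun_iff_map_prod_eq_prod_map_map
      hTm.aemeasurable hCm.aemeasurable).mp hInd
  -- integrability of min · τ under ν
  have hm1 : Measurable (fun t : ℝ => min t τ) := measurable_id.min measurable_const
  have hIntν : Integrable (fun t : ℝ => min t τ) ν := by
    rw [hν, integrable_map_measure hm1.aestronglyMeasurable hTm.aemeasurable]
    exact hInt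
  -- integrability of F over the product
  have hIntfst : Integrable (fun p : ℝ × ℝ => min p.1 τ) (ν.prod κ) := by
    have h1 : (ν.prod κ).map Prod.fst = ν := by
      rw [Measure.map_fst_prod, measure_univ, one_smul]
    exact (integrable_map_measure hm1.aestronglyMeasurable
      measurable_fst.aemeasurable (μ := ν.prod κ)).mp (by rw [h1]; exact hIntν)
  have hIntF : Integrable F (ν.prod κ) := by
    refine (hIntfst.const_mul (G τ)⁻¹).mono hFm.aestronglyMeasurable ?_
    filter_upwards with p
    rw [hF]
    by_cases h : min p.1 τ < p.2
    · simp only [h, if_true]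
      have hg := hGmin p.1
      have hgτ : G τ ≤ G (min p.1 τ) := hGanti (min_le_right _ _)
      rw [Real.norm_eq_abs, Real.norm_eq_abs, abs_div, abs_of_pos hg, abs_mul,
        abs_of_pos (inv_pos.mpr hGτ)]
      rw [div_le_iff₀ hg, mul_comm ((G τ)⁻¹) |min p.1 τ|, mul_assoc]
      refine le_mul_of_one_le_right (abs_nonneg _) ?_
      rw [← div_eq_inv_mul, le_div_iff₀ hGτ, one_mul]
      exact hgτ
    · simp only [h, if_false, norm_zero]
      positivity
  -- main computation
  calc ∫ ω, (if min (T ω) τ < C ω then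
        min (min (T ω) (C ω)) τ / G (min (min (T ω) (C ω)) τ) else 0) ∂μ
      = ∫ ω, F (T ω, C ω) ∂μ := by simp_rw [hpt]
    _ = ∫ p, F p ∂(ν.prod κ) := by
        rw [← hmap, integral_map (hTm.prodMk hCm).aemeasurable
          (hmap ▸ hFm.aestronglyMeasurable)]
    _ = ∫ t, ∫ c, F (t, c) ∂κ ∂ν := integral_prod F hIntF
    _ = ∫ t, min t τ ∂ν := by
        refine integral_congr_ae (Filter.Eventually.of_forall fun t => ?_)
        have : ∀ c : ℝ, F (t, c) =
            Set.indicator (Set.Ioi (min t τ)) (fun _ => min t τ / G (min t τ)) c := by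
          intro c
          rw [hF, Set.indicator_apply]
          simp [Set.mem_Ioi]
        simp_rw [this]
        rw [integral_indicator_const _ measurableSet_Ioi, measureReal_def, ← hGκ]
        rw [smul_eq_mul, mul_comm, div_mul_cancel₀ _ (ne_of_gt (hGmin t))]
    _ = ∫ ω, min (T ω) τ ∂μ := by
        rw [hν, integral_map hTm.aemeasurable hm1.aestronglyMeasurable]
end

section
/- Let Λ, Λ̂ : [0,τ] → ℝ be nondecreasing right-continuous functions with Λ(0) = Λ̂(0) = 0, and let S(t) = exp(−Λ(t)), Ŝ(t) = exp(−Λ̂(t)) be continuous (i.e., Λ, Λ̂ continuous). Then the Duhamel identity holds: S(t) − Ŝ(t) = Ŝ(t) ∫₀^t (S(u)/Ŝ(u)) (dΛ̂(u) − dΛ(u)) for all t ∈ [0,τ]. -/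
open MeasureTheory

/-- Mean value theorem for `Real.exp`. -/
lemma exp_mvt (x y : ℝ) :
    ∃ c ∈ Set.uIcc x y, Real.exp y - Real.exp x = Real.exp c * (y - x) := by
  rcases lt_trichotomy x y with h | h | h
  · obtain ⟨c, hc, hc'⟩ := exists_hasDerivAt_eq_slope Real.exp Real.exp h
      (Real.continuous_exp.continuousOn) (fun u _ => Real.hasDerivAt_exp u)
    refine ⟨c, ?_, ?_⟩
    · exact Set.mem_uIcc.2 (Or.inl ⟨le_of_lt hc.1, le_of_lt hc.2⟩)
    · rw [eq_div_iff (sub_ne_zero.2 (ne_of_gt h))] at hc'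
      linear_combination -hc'
  · exact ⟨x, Set.left_mem_uIcc, by rw [h]; ring⟩
  · obtain ⟨c, hc, hc'⟩ := exists_hasDerivAt_eq_slope Real.exp Real.exp h
      (Real.continuous_exp.continuousOn) (fun u _ => Real.hasDerivAt_exp u)
    refine ⟨c, ?_, ?_⟩
    · exact Set.mem_uIcc.2 (Or.inr ⟨le_of_lt hc.1, le_of_lt hc.2⟩)
    · rw [eq_div_iff (sub_ne_zero.2 (ne_of_gt h))] at hc'
      linear_combination hc'

/-- Approximate the integral of `f` over `Ioc a b` by a constant close to `f` there. -/
lemma const_approx (f : ℝ → ℝ) (hf : Continuous f) (μ : Measure ℝ)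
    [IsLocallyFiniteMeasure μ] (a b : ℝ) (c ε : ℝ)
    (h : ∀ v ∈ Set.Ioc a b, |c - f v| ≤ ε) (hμ : μ (Set.Ioc a b) ≠ ⊤) :
    |c * (μ (Set.Ioc a b)).toReal - ∫ v in Set.Ioc a b, f v ∂μ|
      ≤ ε * (μ (Set.Ioc a b)).toReal := by
  have hint : IntegrableOn f (Set.Ioc a b) μ := hf.integrableOn_Ioc
  have hconst : IntegrableOn (fun _ : ℝ => c) (Set.Ioc a b) μ :=
    integrableOn_const hμ
  have h1 : c * (μ (Set.Ioc a b)).toReal = ∫ _ in Set.Ioc a b, c ∂μ := by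
    rw [setIntegral_const, smul_eq_mul, mul_comm]; rfl
  rw [h1, ← integral_sub hconst hint]
  have hb := norm_setIntegral_le_of_norm_le_const (μ := μ) (s := Set.Ioc a b)
      (f := fun v => c - f v) (C := ε) hμ.lt_top
      (fun x hx => by simpa using h x hx)
  rw [Real.norm_eq_abs] at hb; exact hb

/-- One-interval estimate. -/
lemma duhamel_step (Λ Λh : StieltjesFunction ℝ)
    (hΛc : Continuous fun x => Λ x) (hΛhc : Continuous fun x => Λh x)
    (a b : ℝ) (hab : a ≤ b) (ε : ℝ)
    (hosc : ∀ u ∈ Set.Icc a b, ∀ v ∈ Set.Icc a b,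
      |Real.exp (Λh u - Λ u) - Real.exp (Λh v - Λ v)| ≤ ε) :
    |(Real.exp (Λh b - Λ b) - Real.exp (Λh a - Λ a))
        - ((∫ u in Set.Ioc a b, Real.exp (Λh u - Λ u) ∂Λh.measure)
          - ∫ u in Set.Ioc a b, Real.exp (Λh u - Λ u) ∂Λ.measure)|
      ≤ ε * ((Λh b - Λh a) + (Λ b - Λ a)) := by
  set f : ℝ → ℝ := fun u => Real.exp (Λh u - Λ u) with hfdef
  have hfc : Continuous f := Real.continuous_exp.comp (hΛhc.sub hΛc)
  set g : ℝ → ℝ := fun u => Λh u - Λ u with hgdef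
  have hgc : Continuous g := hΛhc.sub hΛc
  -- MVT + IVT: there is u₀ ∈ [a,b] with f b - f a = f u₀ * (g b - g a)
  obtain ⟨c, hc, hc'⟩ := exp_mvt (g a) (g b)
  have hivt : c ∈ g '' Set.uIcc a b := by
    refine intermediate_value_uIcc hgc.continuousOn ?_
    exact hc
  obtain ⟨u₀, hu₀, hgu₀⟩ := hivt
  rw [Set.uIcc_of_le hab] at hu₀
  have key : f b - f a = f u₀ * (g b - g a) := by
    simp only [hfdef, hgdef] at *
    rw [hc', hgu₀]
  -- measures of the interval
  have hΛhm : Λh.measure (Set.Ioc a b) = ENNReal.ofReal (Λh b - Λh a) :=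
    StieltjesFunction.measure_Ioc Λh a b
  have hΛm : Λ.measure (Set.Ioc a b) = ENNReal.ofReal (Λ b - Λ a) :=
    StieltjesFunction.measure_Ioc Λ a b
  have hΛhnn : 0 ≤ Λh b - Λh a := sub_nonneg.2 (Λh.mono hab)
  have hΛnn : 0 ≤ Λ b - Λ a := sub_nonneg.2 (Λ.mono hab)
  have hΛhtoReal : (Λh.measure (Set.Ioc a b)).toReal = Λh b - Λh a := by
    rw [hΛhm, ENNReal.toReal_ofReal hΛhnn]
  have hΛtoReal : (Λ.measure (Set.Ioc a b)).toReal = Λ b - Λ a := by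
    rw [hΛm, ENNReal.toReal_ofReal hΛnn]
  have hεnn : 0 ≤ ε := by
    have := hosc a ⟨le_refl a, hab⟩ a ⟨le_refl a, hab⟩
    simpa using this
  have hbound : ∀ v ∈ Set.Ioc a b, |f u₀ - f v| ≤ ε := by
    intro v hv
    exact hosc u₀ hu₀ v ⟨le_of_lt hv.1, hv.2⟩
  have h1 : |f u₀ * (Λh b - Λh a) - ∫ u in Set.Ioc a b, f u ∂Λh.measure|
      ≤ ε * (Λh b - Λh a) := by
    have := const_approx f hfc Λh.measure a b (f u₀) ε hbound (by rw [hΛhm]; exact ENNReal.ofReal_ne_top)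
    rwa [hΛhtoReal] at this
  have h2 : |f u₀ * (Λ b - Λ a) - ∫ u in Set.Ioc a b, f u ∂Λ.measure|
      ≤ ε * (Λ b - Λ a) := by
    have := const_approx f hfc Λ.measure a b (f u₀) ε hbound (by rw [hΛm]; exact ENNReal.ofReal_ne_top)
    rwa [hΛtoReal] at this
  have hgba : g b - g a = (Λh b - Λh a) - (Λ b - Λ a) := by simp [hgdef]; ring
  calc |(f b - f a) - ((∫ u in Set.Ioc a b, f u ∂Λh.measure)
          - ∫ u in Set.Ioc a b, f u ∂Λ.measure)|
      = |(f u₀ * (Λh b - Λh a) - ∫ u in Set.Ioc a b, f u ∂Λh.measure)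
          - (f u₀ * (Λ b - Λ a) - ∫ u in Set.Ioc a b, f u ∂Λ.measure)| := by
        rw [key, hgba]; ring_nf
    _ ≤ |f u₀ * (Λh b - Λh a) - ∫ u in Set.Ioc a b, f u ∂Λh.measure|
          + |f u₀ * (Λ b - Λ a) - ∫ u in Set.Ioc a b, f u ∂Λ.measure| := abs_sub _ _
    _ ≤ ε * (Λh b - Λh a) + ε * (Λ b - Λ a) := add_le_add h1 h2
    _ = ε * ((Λh b - Λh a) + (Λ b - Λ a)) := by ring

/-- The key Duhamel identity in exponential form. -/
lemma duhamel_key (Λ Λh : StieltjesFunction ℝ)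
    (hΛc : Continuous fun x => Λ x) (hΛhc : Continuous fun x => Λh x)
    (t : ℝ) (ht : 0 ≤ t) :
    Real.exp (Λh t - Λ t) - Real.exp (Λh 0 - Λ 0)
      = (∫ u in Set.Ioc (0:ℝ) t, Real.exp (Λh u - Λ u) ∂Λh.measure)
        - ∫ u in Set.Ioc (0:ℝ) t, Real.exp (Λh u - Λ u) ∂Λ.measure := by
  set f : ℝ → ℝ := fun u => Real.exp (Λh u - Λ u) with hfdef
  have hfc : Continuous f := Real.continuous_exp.comp (hΛhc.sub hΛc)
  set L : ℝ := Real.exp (Λh t - Λ t) - Real.exp (Λh 0 - Λ 0) with hL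
  set R : ℝ := (∫ u in Set.Ioc (0:ℝ) t, f u ∂Λh.measure)
        - ∫ u in Set.Ioc (0:ℝ) t, f u ∂Λ.measure with hR
  set C : ℝ := (Λh t - Λh 0) + (Λ t - Λ 0) with hC
  have hCnn : 0 ≤ C := by
    have := Λ.mono ht; have := Λh.mono ht; simp [hC]; linarith [Λ.mono ht, Λh.mono ht]
  -- suffices: for all ε > 0, |L - R| ≤ ε * (C + 1)
  have main : ∀ ε > (0:ℝ), |L - R| ≤ ε * (C + 1) := by
    intro ε hε
    -- uniform continuity of f on [0, t]
    have hucf : UniformContinuousOn f (Set.Icc 0 t) :=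
      (isCompact_Icc).uniformContinuousOn_of_continuous hfc.continuousOn
    rw [Metric.uniformContinuousOn_iff] at hucf
    obtain ⟨δ, hδ, hδ'⟩ := hucf ε hε
    -- choose n with t / n < δ
    obtain ⟨n, hn⟩ := exists_nat_gt (t / δ)
    have hn1 : t / (n + 1 : ℝ) < δ := by
      have hn' : t / δ < (n:ℝ) + 1 := lt_of_lt_of_le hn (by linarith)
      rw [div_lt_iff₀ hδ] at hn'
      rw [div_lt_iff₀ (by positivity)]
      linarith
    set N : ℕ := n + 1 with hN
    have hNpos : (0:ℝ) < N := by positivity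
    set p : ℕ → ℝ := fun i => i * (t / N) with hp
    have hstep : 0 ≤ t / N := by positivity
    have hpmono : ∀ i, p i ≤ p (i + 1) := by
      intro i
      have hi : (i:ℝ) ≤ ((i+1:ℕ):ℝ) := by exact_mod_cast Nat.le_succ i
      exact mul_le_mul_of_nonneg_right hi hstep
    have hp0 : p 0 = 0 := by simp [hp]
    have hpN : p N = t := by
      simp only [hp]
      field_simp
    have hpIcc : ∀ i ≤ N, p i ∈ Set.Icc (0:ℝ) t := by
      intro i hi
      constructor
      · simp only [hp]; positivity
      · have hiN : (i:ℝ) ≤ (N:ℝ) := by exact_mod_cast hi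
        have h1 : (i:ℝ) * (t / N) ≤ (N:ℝ) * (t / N) :=
          mul_le_mul_of_nonneg_right hiN hstep
        have h2 : (N:ℝ) * (t / N) = t := by field_simp
        simp only [hp]
        linarith
    -- oscillation bound on each subinterval
    have hoscI : ∀ i < N, ∀ u ∈ Set.Icc (p i) (p (i+1)), ∀ v ∈ Set.Icc (p i) (p (i+1)),
        |f u - f v| ≤ ε := by
      intro i hi u hu v hv
      have hiN : i + 1 ≤ N := hi
      have hu' : u ∈ Set.Icc (0:ℝ) t :=
        ⟨le_trans (hpIcc i (le_of_lt hi)).1 hu.1, le_trans hu.2 (hpIcc (i+1) hiN).2⟩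
      have hv' : v ∈ Set.Icc (0:ℝ) t :=
        ⟨le_trans (hpIcc i (le_of_lt hi)).1 hv.1, le_trans hv.2 (hpIcc (i+1) hiN).2⟩
      have hdist : dist u v < δ := by
        rw [Real.dist_eq]
        have h1 : p (i+1) - p i = t / N := by
          simp only [hp]; push_cast; ring
        have : |u - v| ≤ p (i+1) - p i := by
          rw [abs_sub_le_iff]
          exact ⟨by linarith [hu.2, hv.1], by linarith [hv.2, hu.1]⟩
        calc |u - v| ≤ p (i+1) - p i := this
          _ = t / N := h1
          _ < δ := by rw [hN]; push_cast; exact hn1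
      have := hδ' u hu' v hv' hdist
      rw [Real.dist_eq] at this
      exact le_of_lt this
    -- interval integrability
    have hintΛh : ∀ i < N, IntervalIntegrable f Λh.measure (p i) (p (i+1)) :=
      fun i _ => hfc.intervalIntegrable _ _
    have hintΛ : ∀ i < N, IntervalIntegrable f Λ.measure (p i) (p (i+1)) :=
      fun i _ => hfc.intervalIntegrable _ _
    -- decompose integrals
    have hsumΛh : ∑ i ∈ Finset.range N, ∫ u in Set.Ioc (p i) (p (i+1)), f u ∂Λh.measure
        = ∫ u in Set.Ioc (0:ℝ) t, f u ∂Λh.measure := by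
      have := intervalIntegral.sum_integral_adjacent_intervals hintΛh
      rw [hp0, hpN] at this
      rw [← intervalIntegral.integral_of_le ht, ← this]
      refine Finset.sum_congr rfl (fun i hi => ?_)
      rw [intervalIntegral.integral_of_le (hpmono i)]
    have hsumΛ : ∑ i ∈ Finset.range N, ∫ u in Set.Ioc (p i) (p (i+1)), f u ∂Λ.measure
        = ∫ u in Set.Ioc (0:ℝ) t, f u ∂Λ.measure := by
      have := intervalIntegral.sum_integral_adjacent_intervals hintΛ
      rw [hp0, hpN] at this
      rw [← intervalIntegral.integral_of_le ht, ← this]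
      refine Finset.sum_congr rfl (fun i hi => ?_)
      rw [intervalIntegral.integral_of_le (hpmono i)]
    have hsumf : ∑ i ∈ Finset.range N, (f (p (i+1)) - f (p i)) = f t - f 0 := by
      rw [Finset.sum_range_sub (fun i => f (p i)) N, hp0, hpN]
    -- combine
    have hLR : L - R = ∑ i ∈ Finset.range N,
        ((f (p (i+1)) - f (p i))
          - ((∫ u in Set.Ioc (p i) (p (i+1)), f u ∂Λh.measure)
            - ∫ u in Set.Ioc (p i) (p (i+1)), f u ∂Λ.measure)) := by
      calc L - R = (∑ i ∈ Finset.range N, (f (p (i+1)) - f (p i)))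
            - ((∑ i ∈ Finset.range N, ∫ u in Set.Ioc (p i) (p (i+1)), f u ∂Λh.measure)
              - ∑ i ∈ Finset.range N, ∫ u in Set.Ioc (p i) (p (i+1)), f u ∂Λ.measure) := by
            rw [hsumf, hsumΛh, hsumΛ]
        _ = _ := by
            rw [← Finset.sum_sub_distrib, ← Finset.sum_sub_distrib]
    rw [hLR]
    calc |∑ i ∈ Finset.range N, ((f (p (i+1)) - f (p i))
          - ((∫ u in Set.Ioc (p i) (p (i+1)), f u ∂Λh.measure)
            - ∫ u in Set.Ioc (p i) (p (i+1)), f u ∂Λ.measure))|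
        ≤ ∑ i ∈ Finset.range N, |((f (p (i+1)) - f (p i))
          - ((∫ u in Set.Ioc (p i) (p (i+1)), f u ∂Λh.measure)
            - ∫ u in Set.Ioc (p i) (p (i+1)), f u ∂Λ.measure))| :=
          Finset.abs_sum_le_sum_abs _ _
      _ ≤ ∑ i ∈ Finset.range N, ε * ((Λh (p (i+1)) - Λh (p i)) + (Λ (p (i+1)) - Λ (p i))) := by
          refine Finset.sum_le_sum (fun i hi => ?_)
          exact duhamel_step Λ Λh hΛc hΛhc (p i) (p (i+1)) (hpmono i) ε
            (hoscI i (Finset.mem_range.1 hi))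
      _ = ε * ((Λh t - Λh 0) + (Λ t - Λ 0)) := by
          rw [← Finset.mul_sum]
          congr 1
          rw [Finset.sum_add_distrib,
            Finset.sum_range_sub (fun i => Λh (p i)) N,
            Finset.sum_range_sub (fun i => Λ (p i)) N, hp0, hpN]
      _ ≤ ε * (C + 1) := by
          rw [hC]
          nlinarith [hε]
  -- conclude
  have habs : |L - R| ≤ 0 := by
    by_contra h
    push_neg at h
    have hC1 : (0:ℝ) < C + 1 := by linarith
    have hpos : (0:ℝ) < 2 * (C + 1) := by linarith
    have h2 := main (|L - R| / (2 * (C + 1))) (div_pos h hpos)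
    have h3 : |L - R| / (2 * (C + 1)) * (C + 1) = |L - R| / 2 := by
      field_simp
    rw [h3] at h2
    linarith
  exact sub_eq_zero.1 (abs_eq_zero.1 (le_antisymm habs (abs_nonneg _)))

/-- Duhamel identity: S(t) − Ŝ(t) = Ŝ(t)∫₀^t (S/Ŝ)(dΛ̂ − dΛ). -/
theorem stmt5
    (τ : ℝ) (hτ : 0 < τ)
    (Λ Λh : StieltjesFunction ℝ)
    (hΛc : Continuous fun x => Λ x) (hΛhc : Continuous fun x => Λh x)
    (hΛ0 : Λ 0 = 0) (hΛh0 : Λh 0 = 0)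
    (S Sh : ℝ → ℝ)
    (hS : ∀ u, S u = Real.exp (-(Λ u)))
    (hSh : ∀ u, Sh u = Real.exp (-(Λh u)))
    (t : ℝ) (ht : t ∈ Set.Icc 0 τ) :
    S t - Sh t
      = Sh t * ((∫ u in Set.Ioc (0:ℝ) t, S u / Sh u ∂Λh.measure)
          - ∫ u in Set.Ioc (0:ℝ) t, S u / Sh u ∂Λ.measure) := by
  have hdiv : ∀ u, S u / Sh u = Real.exp (Λh u - Λ u) := by
    intro u
    rw [hS, hSh, ← Real.exp_sub]
    ring_nf
  have key := duhamel_key Λ Λh hΛc hΛhc t ht.1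
  rw [hΛ0, hΛh0] at key
  simp only [sub_zero, Real.exp_zero] at key
  simp only [hdiv]
  rw [← key, hS, hSh]
  rw [mul_sub, ← Real.exp_add, mul_one]
  ring_nf
end

section
/- Let S, Ŝ : [0,τ] → (0,1] be continuous survival functions of the form S = exp(−Λ), Ŝ = exp(−Λ̂) with Λ, Λ̂ continuous nondecreasing and vanishing at 0. Define RMST(t) = ∫₀^t S(u) du and R̂MST(t) = ∫₀^t Ŝ(u) du. Then R̂MST(τ) − RMST(τ) = −R̂MST(τ) ∫₀^τ (S(t)/Ŝ(t)) (dΛ̂(t) − dΛ(t)) + ∫₀^τ (R̂MST(t) S(t)/Ŝ(t)) (dΛ̂(t) − dΛ(t)). -/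
open MeasureTheory Set Nat

namespace Stmt6Aux

lemma leftLim_eq' (f : StieltjesFunction ℝ) (hf : Continuous fun x => f x) (a : ℝ) :
    Function.leftLim (fun x => f x) a = f a :=
  leftLim_eq_of_tendsto
    ((hf.tendsto a).mono_left nhdsWithin_le_nhds)

lemma noAtoms' (f : StieltjesFunction ℝ) (hf : Continuous fun x => f x) : NoAtoms f.measure := by
  refine ⟨fun a => ?_⟩
  rw [f.measure_singleton]
  rw [show Function.leftLim (⇑f) a = f a from leftLim_eq' f hf a, sub_self, ENNReal.ofReal_zero]

lemma measure_Icc_toReal (f : StieltjesFunction ℝ) (hf : Continuous fun x => f x) {a b : ℝ}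
    (hab : a ≤ b) : (f.measure (Icc a b)).toReal = f b - f a := by
  rw [f.measure_Icc, show Function.leftLim (⇑f) a = f a from leftLim_eq' f hf a,
    ENNReal.toReal_ofReal (sub_nonneg.2 (f.mono hab))]

lemma mIoc_ne_top (f : StieltjesFunction ℝ) (a b : ℝ) : f.measure (Ioc a b) ≠ ⊤ := by
  rw [f.measure_Ioc]; exact ENNReal.ofReal_ne_top

lemma isFinite_restrict (ρ : Measure ℝ) (s : Set ℝ) (h : ρ s ≠ ⊤) :
    IsFiniteMeasure (ρ.restrict s) :=
  ⟨by rwa [Measure.restrict_apply_univ, lt_top_iff_ne_top]⟩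

lemma contIntegrableOn (g : ℝ → ℝ) (hg : Continuous g) (f : StieltjesFunction ℝ) (a b : ℝ) :
    IntegrableOn g (Ioc a b) f.measure :=
  (hg.integrableOn_Icc).mono_set Ioc_subset_Icc_self


lemma fubini_core (μ ν : Measure ℝ) (c : ℝ)
    (hμ : μ (Ioc 0 c) ≠ ⊤) (hν : ν (Ioc 0 c) ≠ ⊤)
    (F : ℝ → ℝ → ℝ) (hF : Continuous (Function.uncurry F)) :
    ∫ t in Ioc 0 c, (∫ s in Ioc 0 t, F t s ∂ν) ∂μ
      = ∫ s in Ioc 0 c, (∫ t in Icc s c, F t s ∂μ) ∂ν := by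
  haveI := isFinite_restrict μ _ hμ
  haveI := isFinite_restrict ν _ hν
  obtain ⟨C, hC⟩ := (isCompact_Icc.prod isCompact_Icc :
      IsCompact (Icc (0:ℝ) c ×ˢ Icc (0:ℝ) c)).exists_bound_of_continuousOn hF.continuousOn
  set k : ℝ → ℝ → ℝ := fun t s => (Ioc 0 t).indicator (F t) s with hk
  have hkeq : Function.uncurry k
      = ({p : ℝ × ℝ | 0 < p.2 ∧ p.2 ≤ p.1}).indicator (Function.uncurry F) := by
    ext p
    by_cases h : 0 < p.2 ∧ p.2 ≤ p.1 <;>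
      simp [Function.uncurry, hk, Set.indicator_apply, Set.mem_Ioc, h]
  have hset : MeasurableSet {p : ℝ × ℝ | 0 < p.2 ∧ p.2 ≤ p.1} :=
    (measurableSet_lt measurable_const measurable_snd).inter
      (measurableSet_le measurable_snd measurable_fst)
  have hmeas : StronglyMeasurable (Function.uncurry k) := by
    rw [hkeq]; exact hF.stronglyMeasurable.indicator hset
  have hint : Integrable (Function.uncurry k)
      ((μ.restrict (Ioc 0 c)).prod (ν.restrict (Ioc 0 c))) := by
    refine Integrable.mono' (integrable_const (max C 0)) hmeas.aestronglyMeasurable ?_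
    have e1 : (μ.restrict (Ioc 0 c)) ((Ioc 0 c)ᶜ) = 0 := by
      rw [Measure.restrict_apply measurableSet_Ioc.compl, Set.compl_inter_self, measure_empty]
    have e2 : (ν.restrict (Ioc 0 c)) ((Ioc 0 c)ᶜ) = 0 := by
      rw [Measure.restrict_apply measurableSet_Ioc.compl, Set.compl_inter_self, measure_empty]
    have hz : ((μ.restrict (Ioc 0 c)).prod (ν.restrict (Ioc 0 c))) ((Ioc 0 c ×ˢ Ioc 0 c)ᶜ) = 0 := by
      rw [Set.compl_prod_eq_union]
      refine le_antisymm (le_trans (measure_union_le _ _) ?_) _root_.zero_le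
      rw [Measure.prod_prod, Measure.prod_prod, e1, e2]
      simp
    have hmem : ∀ᵐ p ∂((μ.restrict (Ioc 0 c)).prod (ν.restrict (Ioc 0 c))),
        p ∈ Ioc 0 c ×ˢ Ioc 0 c := by
      refine MeasureTheory.ae_iff.mpr ?_
      simpa [Set.compl_def] using hz
    filter_upwards [hmem] with p hp
    rw [hkeq]
    rcases hp with ⟨hp1, hp2⟩
    by_cases h : p ∈ {p : ℝ × ℝ | 0 < p.2 ∧ p.2 ≤ p.1}
    · rw [Set.indicator_of_mem h]
      exact le_trans (hC _ ⟨⟨hp1.1.le, hp1.2⟩, ⟨hp2.1.le, hp2.2⟩⟩) (le_max_left _ _)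
    · rw [Set.indicator_of_notMem h]
      simpa using le_max_right C 0
  have hswap := integral_integral_swap hint
  have hL : ∫ t in Ioc 0 c, (∫ s in Ioc 0 t, F t s ∂ν) ∂μ
      = ∫ t, (∫ s, k t s ∂(ν.restrict (Ioc 0 c))) ∂(μ.restrict (Ioc 0 c)) := by
    refine integral_congr_ae ?_
    filter_upwards [ae_restrict_mem measurableSet_Ioc] with t ht
    rw [hk]
    rw [integral_indicator measurableSet_Ioc, Measure.restrict_restrict measurableSet_Ioc,
      Set.Ioc_inter_Ioc, max_self, min_eq_left ht.2]
  have hR : ∫ s, (∫ t, k t s ∂(μ.restrict (Ioc 0 c))) ∂(ν.restrict (Ioc 0 c))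
      = ∫ s in Ioc 0 c, (∫ t in Icc s c, F t s ∂μ) ∂ν := by
    refine integral_congr_ae ?_
    filter_upwards [ae_restrict_mem measurableSet_Ioc] with s hs
    have h1 : (fun t => k t s) = (Ici s).indicator (fun t => F t s) := by
      funext t
      simp only [hk, Set.indicator_apply, Set.mem_Ioc, Set.mem_Ici]
      by_cases h : s ≤ t <;> simp [h, hs.1]
    rw [h1, integral_indicator measurableSet_Ici, Measure.restrict_restrict measurableSet_Ici,
      show Ici s ∩ Ioc 0 c = Icc s c by
        ext x
        simp only [Set.mem_inter_iff, Set.mem_Ici, Set.mem_Ioc, Set.mem_Icc]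
        exact ⟨fun h => ⟨h.1, h.2.2⟩, fun h => ⟨h.1, lt_of_lt_of_le hs.1 h.1, h.2⟩⟩]
  rw [hL, hswap, hR]

lemma fubini_core2 (μ ν : Measure ℝ) (c : ℝ)
    (hμ : μ (Ioc 0 c) ≠ ⊤) (hν : ν (Ioc 0 c) ≠ ⊤)
    (F : ℝ → ℝ → ℝ) (hF : Continuous (Function.uncurry F)) :
    ∫ t in Ioc 0 c, (∫ s in Ioc t c, F t s ∂ν) ∂μ
      = ∫ s in Ioc 0 c, (∫ t in Ioo 0 s, F t s ∂μ) ∂ν := by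
  haveI := isFinite_restrict μ _ hμ
  haveI := isFinite_restrict ν _ hν
  obtain ⟨C, hC⟩ := (isCompact_Icc.prod isCompact_Icc :
      IsCompact (Icc (0:ℝ) c ×ˢ Icc (0:ℝ) c)).exists_bound_of_continuousOn hF.continuousOn
  set k : ℝ → ℝ → ℝ := fun t s => (Ioc t c).indicator (F t) s with hk
  have hkeq : Function.uncurry k
      = ({p : ℝ × ℝ | p.1 < p.2 ∧ p.2 ≤ c}).indicator (Function.uncurry F) := by
    ext p
    by_cases h : p.1 < p.2 ∧ p.2 ≤ c <;>
      simp [Function.uncurry, hk, Set.indicator_apply, Set.mem_Ioc, h]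
  have hset : MeasurableSet {p : ℝ × ℝ | p.1 < p.2 ∧ p.2 ≤ c} :=
    (measurableSet_lt measurable_fst measurable_snd).inter
      (measurableSet_le measurable_snd measurable_const)
  have hmeas : StronglyMeasurable (Function.uncurry k) := by
    rw [hkeq]; exact hF.stronglyMeasurable.indicator hset
  have hint : Integrable (Function.uncurry k)
      ((μ.restrict (Ioc 0 c)).prod (ν.restrict (Ioc 0 c))) := by
    refine Integrable.mono' (integrable_const (max C 0)) hmeas.aestronglyMeasurable ?_
    have e1 : (μ.restrict (Ioc 0 c)) ((Ioc 0 c)ᶜ) = 0 := by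
      rw [Measure.restrict_apply measurableSet_Ioc.compl, Set.compl_inter_self, measure_empty]
    have e2 : (ν.restrict (Ioc 0 c)) ((Ioc 0 c)ᶜ) = 0 := by
      rw [Measure.restrict_apply measurableSet_Ioc.compl, Set.compl_inter_self, measure_empty]
    have hz : ((μ.restrict (Ioc 0 c)).prod (ν.restrict (Ioc 0 c))) ((Ioc 0 c ×ˢ Ioc 0 c)ᶜ) = 0 := by
      rw [Set.compl_prod_eq_union]
      refine le_antisymm (le_trans (measure_union_le _ _) ?_) _root_.zero_le
      rw [Measure.prod_prod, Measure.prod_prod, e1, e2]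
      simp
    have hmem : ∀ᵐ p ∂((μ.restrict (Ioc 0 c)).prod (ν.restrict (Ioc 0 c))),
        p ∈ Ioc 0 c ×ˢ Ioc 0 c := by
      refine MeasureTheory.ae_iff.mpr ?_
      simpa [Set.compl_def] using hz
    filter_upwards [hmem] with p hp
    rw [hkeq]
    rcases hp with ⟨hp1, hp2⟩
    by_cases h : p ∈ {p : ℝ × ℝ | p.1 < p.2 ∧ p.2 ≤ c}
    · rw [Set.indicator_of_mem h]
      exact le_trans (hC _ ⟨⟨hp1.1.le, hp1.2⟩, ⟨hp2.1.le, hp2.2⟩⟩) (le_max_left _ _)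
    · rw [Set.indicator_of_notMem h]
      simpa using le_max_right C 0
  have hswap := integral_integral_swap hint
  have hL : ∫ t in Ioc 0 c, (∫ s in Ioc t c, F t s ∂ν) ∂μ
      = ∫ t, (∫ s, k t s ∂(ν.restrict (Ioc 0 c))) ∂(μ.restrict (Ioc 0 c)) := by
    refine integral_congr_ae ?_
    filter_upwards [ae_restrict_mem measurableSet_Ioc] with t ht
    rw [hk]
    rw [integral_indicator measurableSet_Ioc, Measure.restrict_restrict measurableSet_Ioc,
      Set.Ioc_inter_Ioc, min_self, max_eq_left ht.1.le]
  have hR : ∫ s, (∫ t, k t s ∂(μ.restrict (Ioc 0 c))) ∂(ν.restrict (Ioc 0 c))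
      = ∫ s in Ioc 0 c, (∫ t in Ioo 0 s, F t s ∂μ) ∂ν := by
    refine integral_congr_ae ?_
    filter_upwards [ae_restrict_mem measurableSet_Ioc] with s hs
    have h1 : (fun t => k t s) = (Iio s).indicator (fun t => F t s) := by
      funext t
      simp only [hk, Set.indicator_apply, Set.mem_Ioc, Set.mem_Iio]
      by_cases h : t < s <;> simp [h, hs.2]
    rw [h1, integral_indicator measurableSet_Iio, Measure.restrict_restrict measurableSet_Iio,
      show Iio s ∩ Ioc 0 c = Ioo 0 s by
        ext x
        simp only [Set.mem_inter_iff, Set.mem_Iio, Set.mem_Ioc, Set.mem_Ioo]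
        exact ⟨fun h => ⟨h.2.1, h.1⟩, fun h => ⟨h.2, h.1, (h.2.le.trans hs.2)⟩⟩]
  rw [hL, hswap, hR]


lemma inner_monotone (Λa : StieltjesFunction ℝ) (g : ℝ → ℝ) (hg : Continuous g)
    (hg0 : ∀ s, 0 ≤ g s) :
    Monotone fun t => ∫ s in Ioc 0 t, g s ∂Λa.measure := by
  intro t₁ t₂ h
  refine setIntegral_mono_set (contIntegrableOn g hg Λa 0 t₂)
    (Filter.Eventually.of_forall fun s => hg0 s) ?_
  exact (Ioc_subset_Ioc le_rfl h).eventuallyLE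

lemma inner_measurable (Λa : StieltjesFunction ℝ) (g : ℝ → ℝ) (hg : Continuous g) :
    Measurable fun t => ∫ s in Ioc 0 t, g s ∂Λa.measure := by
  have h1 : Continuous fun s => max (g s) 0 := hg.max continuous_const
  have h2 : Continuous fun s => max (-g s) 0 := hg.neg.max continuous_const
  have heq : (fun t => ∫ s in Ioc 0 t, g s ∂Λa.measure)
      = fun t => (∫ s in Ioc 0 t, max (g s) 0 ∂Λa.measure)
          - ∫ s in Ioc 0 t, max (-g s) 0 ∂Λa.measure := by
    funext t
    rw [← integral_sub (contIntegrableOn _ h1 _ _ _) (contIntegrableOn _ h2 _ _ _)]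
    congr 1
    funext s
    simp [max_zero_sub_max_neg_zero_eq_self]
  rw [heq]
  exact ((inner_monotone Λa _ h1 fun s => le_max_right _ _).measurable).sub
    ((inner_monotone Λa _ h2 fun s => le_max_right _ _).measurable)

lemma inner_bound (Λa : StieltjesFunction ℝ) (g : ℝ → ℝ) (hg : Continuous g) (u : ℝ) {t : ℝ}
    (ht : t ≤ u) :
    ‖∫ s in Ioc 0 t, g s ∂Λa.measure‖ ≤ ∫ s in Ioc 0 u, ‖g s‖ ∂Λa.measure := by
  refine (norm_integral_le_integral_norm _).trans ?_
  refine setIntegral_mono_set (contIntegrableOn _ hg.norm Λa 0 u)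
    (Filter.Eventually.of_forall fun s => norm_nonneg _) ?_
  exact (Ioc_subset_Ioc le_rfl ht).eventuallyLE

lemma integrableOn_mul_inner (Λa : StieltjesFunction ℝ) (h g : ℝ → ℝ) (hh : Continuous h)
    (hg : Continuous g) (u : ℝ) (ρ : Measure ℝ) (hρ : ρ (Ioc 0 u) ≠ ⊤) :
    IntegrableOn (fun t => h t * ∫ s in Ioc 0 t, g s ∂Λa.measure) (Ioc 0 u) ρ := by
  haveI := isFinite_restrict ρ _ hρ
  obtain ⟨C, hC⟩ := isCompact_Icc.exists_bound_of_continuousOn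
    (hh.continuousOn : ContinuousOn h (Icc 0 u))
  refine Integrable.mono'
    (integrable_const (max C 0 * ∫ s in Ioc 0 u, ‖g s‖ ∂Λa.measure)) ?_ ?_
  · exact (hh.measurable.mul (inner_measurable Λa g hg)).aestronglyMeasurable
  · filter_upwards [ae_restrict_mem measurableSet_Ioc] with t ht
    rw [norm_mul]
    refine mul_le_mul (le_trans (hC t ⟨ht.1.le, ht.2⟩) (le_max_left _ _))
      (inner_bound Λa g hg u ht.2) (norm_nonneg _) (le_max_right _ _)

lemma integrableOn_inner (Λa : StieltjesFunction ℝ) (g : ℝ → ℝ) (hg : Continuous g)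
    (u : ℝ) (ρ : Measure ℝ) (hρ : ρ (Ioc 0 u) ≠ ⊤) :
    IntegrableOn (fun t => ∫ s in Ioc 0 t, g s ∂Λa.measure) (Ioc 0 u) ρ := by
  simpa using integrableOn_mul_inner Λa (fun _ => 1) g continuous_const hg u ρ hρ


lemma powrec (Λ Λh : StieltjesFunction ℝ)
    (hΛc : Continuous fun x => Λ x) (hΛhc : Continuous fun x => Λh x)
    (hΛ0 : Λ 0 = 0) (hΛh0 : Λh 0 = 0) (n : ℕ) :
    ∀ u, 0 ≤ u →
      (∫ t in Ioc 0 u, (Λh t - Λ t) ^ n ∂Λh.measure)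
          - ∫ t in Ioc 0 u, (Λh t - Λ t) ^ n ∂Λ.measure
        = (Λh u - Λ u) ^ (n + 1) / (n + 1) := by
  induction n with
  | zero =>
    intro u hu
    simp only [pow_zero, pow_one, Nat.cast_zero, zero_add, div_one]
    rw [setIntegral_const, setIntegral_const, measureReal_def, measureReal_def, Λh.measure_Ioc, Λ.measure_Ioc, hΛh0, hΛ0,
      sub_zero, sub_zero, ENNReal.toReal_ofReal (by rw [← hΛh0]; exact Λh.mono hu),
      ENNReal.toReal_ofReal (by rw [← hΛ0]; exact Λ.mono hu)]
    simp
  | succ n ih =>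
    intro u hu
    have hFd : Continuous fun t => Λh t - Λ t := hΛhc.sub hΛc
    have hg : Continuous fun t => (Λh t - Λ t) ^ n := hFd.pow n
    have hn1 : ((n : ℝ) + 1) ≠ 0 := by positivity
    have hInt : ∀ t ∈ Ioc (0:ℝ) u,
        (Λh t - Λ t) ^ (n + 1)
          = ((n : ℝ) + 1) * ((∫ s in Ioc 0 t, (Λh s - Λ s) ^ n ∂Λh.measure)
              - ∫ s in Ioc 0 t, (Λh s - Λ s) ^ n ∂Λ.measure) := by
      intro t ht
      rw [ih t ht.1.le]
      field_simp
    -- Fubini for a fixed outer Stieltjes function B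
    have hfub : ∀ (B A : StieltjesFunction ℝ), (Continuous fun x => B x) →
        ∫ t in Ioc 0 u, (∫ s in Ioc 0 t, (Λh s - Λ s) ^ n ∂A.measure) ∂B.measure
          = ∫ s in Ioc 0 u, (B u - B s) * (Λh s - Λ s) ^ n ∂A.measure := by
      intro B A hBc
      rw [fubini_core B.measure A.measure u (mIoc_ne_top B 0 u) (mIoc_ne_top A 0 u)
        (fun t s => (Λh s - Λ s) ^ n) (hg.comp continuous_snd)]
      refine setIntegral_congr_fun measurableSet_Ioc fun s hs => ?_
      rw [setIntegral_const, measureReal_def, measure_Icc_toReal B hBc hs.2, smul_eq_mul]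
    have key : ∀ (B : StieltjesFunction ℝ), (Continuous fun x => B x) →
        ∫ t in Ioc 0 u, (Λh t - Λ t) ^ (n + 1) ∂B.measure
          = ((n : ℝ) + 1) * ((∫ s in Ioc 0 u, (B u - B s) * (Λh s - Λ s) ^ n ∂Λh.measure)
              - ∫ s in Ioc 0 u, (B u - B s) * (Λh s - Λ s) ^ n ∂Λ.measure) := by
      intro B hBc
      rw [setIntegral_congr_fun measurableSet_Ioc hInt, integral_const_mul _ _,
        integral_sub (integrableOn_inner Λh _ hg u B.measure (mIoc_ne_top B 0 u))
          (integrableOn_inner Λ _ hg u B.measure (mIoc_ne_top B 0 u)),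
        hfub B Λh hBc, hfub B Λ hBc]
    -- regroup per measure
    have regroup : ∀ (A : StieltjesFunction ℝ),
        (∫ s in Ioc 0 u, (Λh u - Λh s) * (Λh s - Λ s) ^ n ∂A.measure)
            - ∫ s in Ioc 0 u, (Λ u - Λ s) * (Λh s - Λ s) ^ n ∂A.measure
          = (Λh u - Λ u) * (∫ s in Ioc 0 u, (Λh s - Λ s) ^ n ∂A.measure)
              - ∫ s in Ioc 0 u, (Λh s - Λ s) ^ (n + 1) ∂A.measure := by
      intro A
      rw [← integral_sub
        (contIntegrableOn (fun s => (Λh u - Λh s) * (Λh s - Λ s) ^ n) ((continuous_const.sub hΛhc).mul hg) A 0 u)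
        (contIntegrableOn (fun s => (Λ u - Λ s) * (Λh s - Λ s) ^ n) ((continuous_const.sub hΛc).mul hg) A 0 u)]
      rw [← integral_const_mul _ _, ← integral_sub
        (contIntegrableOn (fun s => (Λh u - Λ u) * (Λh s - Λ s) ^ n) (continuous_const.mul hg) A 0 u)
        (contIntegrableOn (fun s => (Λh s - Λ s) ^ (n + 1)) (hFd.pow (n + 1)) A 0 u)]
      refine setIntegral_congr_fun measurableSet_Ioc fun s hs => ?_
      ring
    have k1 := key Λh hΛhc
    have k2 := key Λ hΛc
    have e1 := regroup Λh
    have e2 := regroup Λ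
    have e3 : ((n : ℝ) + 1) * ((∫ s in Ioc 0 u, (Λh s - Λ s) ^ n ∂Λh.measure)
        - ∫ s in Ioc 0 u, (Λh s - Λ s) ^ n ∂Λ.measure) = (Λh u - Λ u) ^ (n + 1) := by
      rw [ih u hu]
      field_simp
    push_cast
    rw [eq_div_iff (by positivity : ((n : ℝ) + 1 + 1) ≠ 0)]
    linear_combination k1 - k2 + ((n : ℝ) + 1) * e1 - ((n : ℝ) + 1) * e2
      + ((Λh u : ℝ) - Λ u) * e3


lemma duhamel (Λ Λh : StieltjesFunction ℝ)
    (hΛc : Continuous fun x => Λ x) (hΛhc : Continuous fun x => Λh x)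
    (hΛ0 : Λ 0 = 0) (hΛh0 : Λh 0 = 0) (u : ℝ) (hu : 0 ≤ u) :
    (∫ t in Ioc 0 u, Real.exp (Λh t - Λ t) ∂Λh.measure)
        - ∫ t in Ioc 0 u, Real.exp (Λh t - Λ t) ∂Λ.measure
      = Real.exp (Λh u - Λ u) - 1 := by
  have hFd : Continuous fun t => (Λh t : ℝ) - Λ t := hΛhc.sub hΛc
  have hexp : ∀ y : ℝ, HasSum (fun n => y ^ n / n !) (Real.exp y) := fun y => by
    rw [Real.exp_eq_exp_ℝ]
    exact NormedSpace.expSeries_div_hasSum_exp y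
  have hB : ∀ B : StieltjesFunction ℝ,
      Filter.Tendsto
        (fun N => ∑ n ∈ Finset.range N,
          (∫ t in Ioc 0 u, ((Λh t : ℝ) - Λ t) ^ n ∂B.measure) / n !)
        Filter.atTop
        (nhds (∫ t in Ioc 0 u, Real.exp (Λh t - Λ t) ∂B.measure)) := by
    intro B
    haveI := isFinite_restrict B.measure _ (mIoc_ne_top B 0 u)
    obtain ⟨C, hC⟩ := isCompact_Icc.exists_bound_of_continuousOn
      (hFd.continuousOn : ContinuousOn _ (Icc 0 u))
    have hdct := tendsto_integral_of_dominated_convergence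
      (μ := B.measure.restrict (Ioc 0 u))
      (F := fun N t => ∑ n ∈ Finset.range N, ((Λh t : ℝ) - Λ t) ^ n / n !)
      (f := fun t => Real.exp (Λh t - Λ t))
      (bound := fun _ => Real.exp C)
      (fun N => (Continuous.aestronglyMeasurable (by
        exact continuous_finset_sum _ fun n _ => (hFd.pow n).div_const _)))
      (integrable_const _)
      (fun N => by
        filter_upwards [ae_restrict_mem measurableSet_Ioc] with t ht
        calc ‖∑ n ∈ Finset.range N, ((Λh t : ℝ) - Λ t) ^ n / (n ! : ℝ)‖
            ≤ ∑ n ∈ Finset.range N, ‖((Λh t : ℝ) - Λ t) ^ n / (n ! : ℝ)‖ := norm_sum_le _ _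
          _ = ∑ n ∈ Finset.range N, |(Λh t : ℝ) - Λ t| ^ n / n ! := by
              refine Finset.sum_congr rfl fun n _ => ?_
              rw [norm_div, norm_pow, Real.norm_eq_abs, Real.norm_natCast]
          _ ≤ Real.exp |(Λh t : ℝ) - Λ t| := Real.sum_le_exp_of_nonneg (abs_nonneg _) N
          _ ≤ Real.exp C := Real.exp_le_exp.2 (by
              have := hC t ⟨ht.1.le, ht.2⟩
              rwa [Real.norm_eq_abs] at this))
      (by
        refine Filter.Eventually.of_forall fun t => ?_
        exact (hexp _).tendsto_sum_nat)
    convert hdct using 2 with N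
    rw [integral_finset_sum _ fun n _ =>
      contIntegrableOn (fun t => ((Λh t : ℝ) - Λ t) ^ n / n !) ((hFd.pow n).div_const _) B 0 u]
    exact Finset.sum_congr rfl fun n _ => (integral_div _ _).symm
  have h1 := (hB Λh).sub (hB Λ)
  have heq : (fun N => (∑ n ∈ Finset.range N,
        (∫ t in Ioc 0 u, ((Λh t : ℝ) - Λ t) ^ n ∂Λh.measure) / n !)
      - ∑ n ∈ Finset.range N,
        (∫ t in Ioc 0 u, ((Λh t : ℝ) - Λ t) ^ n ∂Λ.measure) / n !)
      = fun N => ∑ n ∈ Finset.range N, ((Λh u : ℝ) - Λ u) ^ (n + 1) / (n + 1)! := by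
    funext N
    rw [← Finset.sum_sub_distrib]
    refine Finset.sum_congr rfl fun n _ => ?_
    rw [div_sub_div_same, powrec Λ Λh hΛc hΛhc hΛ0 hΛh0 n u hu, div_div]
    congr 1
    push_cast [Nat.factorial_succ]
    ring
  rw [heq] at h1
  have h2 : Filter.Tendsto
      (fun N => ∑ n ∈ Finset.range N, ((Λh u : ℝ) - Λ u) ^ (n + 1) / (n + 1)!)
      Filter.atTop (nhds (Real.exp (Λh u - Λ u) - 1)) := by
    have h4 : Filter.Tendsto
        (fun N => ∑ n ∈ Finset.range (N + 1), ((Λh u : ℝ) - Λ u) ^ n / n !)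
        Filter.atTop (nhds (Real.exp (Λh u - Λ u))) :=
      (hexp _).tendsto_sum_nat.comp (Filter.tendsto_add_atTop_nat 1)
    have h5 : (fun N => ∑ n ∈ Finset.range N, ((Λh u : ℝ) - Λ u) ^ (n + 1) / (n + 1)!)
        = fun N => (∑ n ∈ Finset.range (N + 1), ((Λh u : ℝ) - Λ u) ^ n / n !) - 1 := by
      funext N
      rw [Finset.sum_range_succ']
      simp
    rw [h5]
    simpa using h4.sub_const 1
  exact tendsto_nhds_unique h1 h2

end Stmt6Aux


open Stmt6Aux in
/-- RMST difference decomposition via the Duhamel equation. -/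
theorem stmt6
    (τ : ℝ) (hτ : 0 < τ)
    (Λ Λh : StieltjesFunction ℝ)
    (hΛc : Continuous fun x => Λ x) (hΛhc : Continuous fun x => Λh x)
    (hΛ0 : Λ 0 = 0) (hΛh0 : Λh 0 = 0)
    (S Sh : ℝ → ℝ)
    (hS : ∀ u, S u = Real.exp (-(Λ u)))
    (hSh : ∀ u, Sh u = Real.exp (-(Λh u)))
    (RMST RMSTh : ℝ → ℝ)
    (hRMST : ∀ s, RMST s = ∫ u in (0:ℝ)..s, S u)
    (hRMSTh : ∀ s, RMSTh s = ∫ u in (0:ℝ)..s, Sh u) :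
    RMSTh τ - RMST τ
      = -(RMSTh τ) * ((∫ t in Set.Ioc (0:ℝ) τ, S t / Sh t ∂Λh.measure)
          - ∫ t in Set.Ioc (0:ℝ) τ, S t / Sh t ∂Λ.measure)
        + ((∫ t in Set.Ioc (0:ℝ) τ, RMSTh t * S t / Sh t ∂Λh.measure)
          - ∫ t in Set.Ioc (0:ℝ) τ, RMSTh t * S t / Sh t ∂Λ.measure) := by
  have hFd : Continuous fun t => (Λh t : ℝ) - Λ t := hΛhc.sub hΛc
  have hE : Continuous fun t => Real.exp ((Λh t : ℝ) - Λ t) := Real.continuous_exp.comp hFd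
  have hShc : Continuous Sh := by
    rw [show Sh = fun u => Real.exp (-(Λh u)) from funext hSh]
    exact Real.continuous_exp.comp hΛhc.neg
  have hSc : Continuous S := by
    rw [show S = fun u => Real.exp (-(Λ u)) from funext hS]
    exact Real.continuous_exp.comp hΛc.neg
  have hRMSThc : Continuous RMSTh := by
    rw [show RMSTh = fun s => ∫ u in (0:ℝ)..s, Sh u from funext hRMSTh]
    exact intervalIntegral.continuous_primitive (fun a b => hShc.intervalIntegrable a b) 0
  have hdiv : ∀ t, S t / Sh t = Real.exp ((Λh t : ℝ) - Λ t) := fun t => by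
    rw [hS, hSh, ← Real.exp_sub]
    congr 1
    ring
  have hvol : (volume : Measure ℝ) (Set.Ioc 0 τ) ≠ ⊤ := by
    rw [Real.volume_Ioc]; exact ENNReal.ofReal_ne_top
  -- per-measure key computation
  have key2 : ∀ B : StieltjesFunction ℝ, (Continuous fun x => B x) →
      (∫ t in Set.Ioc (0:ℝ) τ, RMSTh t * S t / Sh t ∂B.measure)
          - RMSTh τ * ∫ t in Set.Ioc (0:ℝ) τ, S t / Sh t ∂B.measure
        = - ∫ s in Set.Ioc (0:ℝ) τ,
            (∫ t in Set.Ioc (0:ℝ) s, Real.exp ((Λh t : ℝ) - Λ t) ∂B.measure) * Sh s := by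
    intro B hBc
    haveI : NullSingletonClass B.measure := noAtoms' B hBc
    have e1 : (∫ t in Set.Ioc (0:ℝ) τ, RMSTh t * S t / Sh t ∂B.measure)
        = ∫ t in Set.Ioc (0:ℝ) τ, RMSTh t * Real.exp ((Λh t : ℝ) - Λ t) ∂B.measure := by
      refine setIntegral_congr_fun measurableSet_Ioc fun t _ => ?_
      rw [mul_div_assoc, hdiv]
    have e2 : (∫ t in Set.Ioc (0:ℝ) τ, S t / Sh t ∂B.measure)
        = ∫ t in Set.Ioc (0:ℝ) τ, Real.exp ((Λh t : ℝ) - Λ t) ∂B.measure := by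
      refine setIntegral_congr_fun measurableSet_Ioc fun t _ => ?_
      rw [hdiv]
    rw [e1, e2, ← integral_const_mul _ _, ← integral_sub
      (contIntegrableOn (fun t => RMSTh t * Real.exp ((Λh t : ℝ) - Λ t)) (hRMSThc.mul hE) B 0 τ)
      (contIntegrableOn (fun t => RMSTh τ * Real.exp ((Λh t : ℝ) - Λ t)) (continuous_const.mul hE) B 0 τ)]
    have e3 : ∀ t ∈ Set.Ioc (0:ℝ) τ,
        RMSTh t * Real.exp ((Λh t : ℝ) - Λ t)
            - RMSTh τ * Real.exp ((Λh t : ℝ) - Λ t)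
          = - ∫ s in Set.Ioc t τ, Real.exp ((Λh t : ℝ) - Λ t) * Sh s := by
      intro t ht
      have hadd := intervalIntegral.integral_add_adjacent_intervals
        (hShc.intervalIntegrable (μ := volume) 0 t) (hShc.intervalIntegrable (μ := volume) t τ)
      rw [integral_const_mul _ _, hRMSTh t, hRMSTh τ, ← hadd,
        intervalIntegral.integral_of_le ht.2]
      ring
    rw [setIntegral_congr_fun measurableSet_Ioc e3, integral_neg, neg_inj]
    rw [fubini_core2 B.measure volume τ (mIoc_ne_top B 0 τ) hvol
      (fun t s => Real.exp ((Λh t : ℝ) - Λ t) * Sh s)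
      ((Real.continuous_exp.comp (hFd.comp continuous_fst)).mul (hShc.comp continuous_snd))]
    refine setIntegral_congr_fun measurableSet_Ioc fun s _ => ?_
    rw [← integral_Ioc_eq_integral_Ioo, integral_mul_const]
  -- rewrite the RHS using key2 for both measures
  have hRHS : -(RMSTh τ) * ((∫ t in Set.Ioc (0:ℝ) τ, S t / Sh t ∂Λh.measure)
          - ∫ t in Set.Ioc (0:ℝ) τ, S t / Sh t ∂Λ.measure)
        + ((∫ t in Set.Ioc (0:ℝ) τ, RMSTh t * S t / Sh t ∂Λh.measure)
          - ∫ t in Set.Ioc (0:ℝ) τ, RMSTh t * S t / Sh t ∂Λ.measure)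
      = ((∫ t in Set.Ioc (0:ℝ) τ, RMSTh t * S t / Sh t ∂Λh.measure)
          - RMSTh τ * ∫ t in Set.Ioc (0:ℝ) τ, S t / Sh t ∂Λh.measure)
        - ((∫ t in Set.Ioc (0:ℝ) τ, RMSTh t * S t / Sh t ∂Λ.measure)
          - RMSTh τ * ∫ t in Set.Ioc (0:ℝ) τ, S t / Sh t ∂Λ.measure) := by ring
  rw [hRHS, key2 Λh hΛhc, key2 Λ hΛc]
  -- combine the two volume integrals
  have hIh := integrableOn_mul_inner Λh Sh (fun t => Real.exp ((Λh t : ℝ) - Λ t)) hShc hE τ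
    volume hvol
  have hIμ := integrableOn_mul_inner Λ Sh (fun t => Real.exp ((Λh t : ℝ) - Λ t)) hShc hE τ
    volume hvol
  have hcomb : - (∫ s in Set.Ioc (0:ℝ) τ,
          (∫ t in Set.Ioc (0:ℝ) s, Real.exp ((Λh t : ℝ) - Λ t) ∂Λh.measure) * Sh s)
        - - (∫ s in Set.Ioc (0:ℝ) τ,
          (∫ t in Set.Ioc (0:ℝ) s, Real.exp ((Λh t : ℝ) - Λ t) ∂Λ.measure) * Sh s)
      = - ∫ s in Set.Ioc (0:ℝ) τ, (Real.exp ((Λh s : ℝ) - Λ s) - 1) * Sh s := by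
    have hIh' : IntegrableOn (fun s =>
        (∫ t in Set.Ioc (0:ℝ) s, Real.exp ((Λh t : ℝ) - Λ t) ∂Λh.measure) * Sh s)
        (Set.Ioc 0 τ) volume := by
      refine hIh.congr_fun (fun s _ => mul_comm _ _) measurableSet_Ioc
    have hIμ' : IntegrableOn (fun s =>
        (∫ t in Set.Ioc (0:ℝ) s, Real.exp ((Λh t : ℝ) - Λ t) ∂Λ.measure) * Sh s)
        (Set.Ioc 0 τ) volume := by
      refine hIμ.congr_fun (fun s _ => mul_comm _ _) measurableSet_Ioc
    have h6 : (∫ s in Set.Ioc (0:ℝ) τ,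
            (∫ t in Set.Ioc (0:ℝ) s, Real.exp ((Λh t : ℝ) - Λ t) ∂Λh.measure) * Sh s)
          - ∫ s in Set.Ioc (0:ℝ) τ,
            (∫ t in Set.Ioc (0:ℝ) s, Real.exp ((Λh t : ℝ) - Λ t) ∂Λ.measure) * Sh s
        = ∫ s in Set.Ioc (0:ℝ) τ, (Real.exp ((Λh s : ℝ) - Λ s) - 1) * Sh s := by
      rw [← integral_sub hIh' hIμ']
      refine setIntegral_congr_fun measurableSet_Ioc fun s hs => ?_
      rw [← sub_mul, duhamel Λ Λh hΛc hΛhc hΛ0 hΛh0 s hs.1.le]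
    linarith [h6]
  rw [hcomb]
  -- compute the LHS
  rw [hRMSTh τ, hRMST τ,
    ← intervalIntegral.integral_sub (hShc.intervalIntegrable 0 τ) (hSc.intervalIntegrable 0 τ),
    intervalIntegral.integral_of_le hτ.le, ← integral_neg]
  refine setIntegral_congr_fun measurableSet_Ioc fun u _ => ?_
  rw [hS, hSh]
  rw [show Real.exp (-(Λ u : ℝ)) = Real.exp (-(Λh u)) * Real.exp ((Λh u : ℝ) - Λ u) by
    rw [← Real.exp_add]; congr 1; ring]
  ring
end

section
/- Let Λ, Λ̂, Λ_j, Λ̂_j be continuous nondecreasing functions on [0,τ] vanishing at 0, with dΛ_j ≤ dΛ and dΛ̂_j ≤ dΛ̂; set S = exp(−Λ), Ŝ = exp(−Λ̂), F_j(t) = ∫₀^t S dΛ_j, F̂_j(t) = ∫₀^t Ŝ dΛ̂_j. Then for every t ∈ [0,τ]: F̂_j(t) − F_j(t) = −F̂_j(t) ∫₀^t (S(u)/Ŝ(u))(dΛ̂(u) − dΛ(u)) + ∫₀^t (F̂_j(u) S(u)/Ŝ(u))(dΛ̂(u) − dΛ(u)) + ∫₀^t S(u)(dΛ̂_j(u)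 − dΛ_j(u)). -/
open MeasureTheory Set Filter Nat
open scoped NNReal ENNReal

noncomputable def ofCM (f : ℝ → ℝ) (hm : Monotone f) (hc : Continuous f) : StieltjesFunction ℝ :=
  ⟨f, hm, fun x => (hc.continuousAt).continuousWithinAt⟩

@[simp] lemma ofCM_apply (f : ℝ → ℝ) (hm : Monotone f) (hc : Continuous f) (x : ℝ) :
    ofCM f hm hc x = f x := rfl

lemma noAtoms_of_cont {f : StieltjesFunction ℝ} (hc : Continuous fun x => f x) :
    NullSingletonClass f.measure := by
  constructor
  intro a
  rw [f.measure_singleton]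
  have : Function.leftLim (fun x => f x) a = f a :=
    leftLim_eq_of_tendsto (hc.continuousAt.continuousWithinAt.tendsto)
  simp [this]

lemma finiteIoc (f : StieltjesFunction ℝ) (a b : ℝ) : IsFiniteMeasure (f.measure.restrict (Ioc a b)) := by
  constructor
  rw [Measure.restrict_apply_univ, f.measure_Ioc]
  exact ENNReal.ofReal_lt_top

lemma integrableIoc {f : StieltjesFunction ℝ} {p : ℝ → ℝ} (hp : Continuous p) (a b : ℝ) :
    IntegrableOn p (Ioc a b) f.measure := by
  have := (hp.continuousOn :  ContinuousOn p (Icc a b)).integrableOn_compact (μ := f.measure) isCompact_Icc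
  exact this.mono_set Ioc_subset_Icc_self


lemma fub (μ ν : Measure ℝ) [IsLocallyFiniteMeasure μ] [IsLocallyFiniteMeasure ν] [NullSingletonClass μ]
    {p q : ℝ → ℝ} (hp : Continuous p) (hq : Continuous q) (a b : ℝ) :
    ∫ u in Ioc a b, p u * ∫ v in Ioc a u, q v ∂ν ∂μ
      = ∫ v in Ioc a b, q v * ∫ u in Ioc v b, p u ∂μ ∂ν := by
  rcases le_or_gt a b with hab | hab
  swap
  · rw [Ioc_eq_empty hab.not_gt]; simp
  set μ' := μ.restrict (Ioc a b) with hμdef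
  set ν' := ν.restrict (Ioc a b) with hνdef
  have hμ' : IsFiniteMeasure μ' := by
    constructor; rw [Measure.restrict_apply_univ]
    exact (isCompact_Icc (a := a) (b := b)).measure_lt_top.trans_le' (measure_mono Ioc_subset_Icc_self)
  have hν' : IsFiniteMeasure ν' := by
    constructor; rw [Measure.restrict_apply_univ]
    exact (isCompact_Icc (a := a) (b := b)).measure_lt_top.trans_le' (measure_mono Ioc_subset_Icc_self)
  set Φ : ℝ × ℝ → ℝ := {x : ℝ × ℝ | x.2 ≤ x.1}.indicator (fun x => p x.1 * q x.2) with hΦ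
  have hmeasΦ : StronglyMeasurable Φ :=
    ((hp.comp continuous_fst).mul (hq.comp continuous_snd)).stronglyMeasurable.indicator
      (isClosed_le continuous_snd continuous_fst).measurableSet
  obtain ⟨Cp, hCp⟩ : ∃ C, ∀ x ∈ Icc a b, ‖p x‖ ≤ C :=
    (isCompact_Icc.exists_bound_of_continuousOn (hp.continuousOn))
  obtain ⟨Cq, hCq⟩ : ∃ C, ∀ x ∈ Icc a b, ‖q x‖ ≤ C :=
    (isCompact_Icc.exists_bound_of_continuousOn (hq.continuousOn))
  have hCp0 : 0 ≤ Cp := (norm_nonneg _).trans (hCp a ⟨le_refl a, hab⟩)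
  have hCq0 : 0 ≤ Cq := (norm_nonneg _).trans (hCq a ⟨le_refl a, hab⟩)
  have hint : Integrable Φ (μ'.prod ν') := by
    refine ⟨hmeasΦ.aestronglyMeasurable, ?_⟩
    have hb : ∀ᵐ x ∂(μ'.prod ν'), ‖Φ x‖ ≤ Cp * Cq := by
      rw [hμdef, hνdef, Measure.prod_restrict]
      refine (ae_restrict_iff' (measurableSet_Ioc.prod measurableSet_Ioc)).2 (ae_of_all _ ?_)
      rintro ⟨u, v⟩ ⟨hu, hv⟩
      rw [hΦ]
      rcases le_or_gt v u with h | h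
      · rw [indicator_of_mem (by exact h)]
        calc ‖p u * q v‖ = ‖p u‖ * ‖q v‖ := norm_mul _ _
        _ ≤ Cp * Cq := mul_le_mul (hCp u (Ioc_subset_Icc_self hu)) (hCq v (Ioc_subset_Icc_self hv)) (norm_nonneg _) hCp0
      · rw [indicator_of_notMem (by exact h.not_ge)]
        simpa using mul_nonneg hCp0 hCq0
    exact (hasFiniteIntegral_const (Cp * Cq)).mono' hb
  have hswap := MeasureTheory.integral_integral_swap (μ := μ') (ν := ν') (f := fun u v => Φ (u, v)) hint
  have hL : ∫ u, (∫ v, Φ (u, v) ∂ν') ∂μ' = ∫ u in Ioc a b, p u * ∫ v in Ioc a u, q v ∂ν ∂μ := by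
    refine setIntegral_congr_fun measurableSet_Ioc (fun u hu => ?_)
    have h1 : (fun v => Φ (u, v)) = (Iic u).indicator (fun v => p u * q v) := by
      ext v; rw [hΦ]
      by_cases h : v ≤ u
      · rw [indicator_of_mem (by exact h), indicator_of_mem (by exact h)]
      · rw [indicator_of_notMem (by exact h), indicator_of_notMem (by exact h)]
    rw [h1, integral_indicator measurableSet_Iic, hνdef, Measure.restrict_restrict measurableSet_Iic]
    have h2 : Iic u ∩ Ioc a b = Ioc a u := by
      ext v; simp only [mem_inter_iff, mem_Iic, mem_Ioc]
      exact ⟨fun ⟨h1, h2, h3⟩ => ⟨h2, h1⟩, fun ⟨h1, h2⟩ => ⟨h2, h1, h2.trans hu.2⟩⟩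
    rw [h2, integral_const_mul]
  have hR : ∫ v, (∫ u, Φ (u, v) ∂μ') ∂ν' = ∫ v in Ioc a b, q v * ∫ u in Ioc v b, p u ∂μ ∂ν := by
    refine setIntegral_congr_fun measurableSet_Ioc (fun v hv => ?_)
    have h1 : (fun u => Φ (u, v)) = (Ici v).indicator (fun u => p u * q v) := by
      ext u; rw [hΦ]
      by_cases h : v ≤ u
      · rw [indicator_of_mem (by exact h), indicator_of_mem (by exact h)]
      · rw [indicator_of_notMem (by exact h), indicator_of_notMem (by exact h)]
    rw [h1, integral_indicator measurableSet_Ici, hμdef, Measure.restrict_restrict measurableSet_Ici]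
    have h2 : Ici v ∩ Ioc a b = Icc v b := by
      ext u; simp only [mem_inter_iff, mem_Ici, mem_Ioc, mem_Icc]
      exact ⟨fun ⟨h1, _, h3⟩ => ⟨h1, h3⟩, fun ⟨h1, h2⟩ => ⟨h1, hv.1.trans_le h1, h2⟩⟩
    rw [h2, integral_Icc_eq_integral_Ioc]
    simp only [mul_comm (q v) _]
    rw [integral_mul_const]
  rw [← hL, ← hR]
  exact hswap


lemma pow_moment (f : StieltjesFunction ℝ) (hc : Continuous fun x => f x) :
    ∀ n : ℕ, ∀ a b : ℝ, a ≤ b →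
      ((n : ℝ) + 1) * ∫ x in Ioc a b, (f x - f a)^n ∂f.measure = (f b - f a)^(n+1) := by
  have : NullSingletonClass f.measure := noAtoms_of_cont hc
  intro n
  induction n with
  | zero =>
    intro a b hab
    simp only [pow_zero, Nat.cast_zero, zero_add, one_mul, pow_one]
    rw [setIntegral_const, measureReal_def, f.measure_Ioc, smul_eq_mul, mul_one,
      ENNReal.toReal_ofReal (sub_nonneg.2 (f.mono hab))]
  | succ n IH =>
    intro a b hab
    have hn : ((n : ℝ) + 1) ≠ 0 := by positivity
    have hqc : Continuous fun x => (f x - f a)^n := ((hc.sub continuous_const).pow n)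
    have key := fub f.measure f.measure (p := fun _ => (1:ℝ)) (q := fun x => (f x - f a)^n)
      continuous_const hqc a b
    have hL : ∫ u in Ioc a b, (1:ℝ) * ∫ v in Ioc a u, (f v - f a)^n ∂f.measure ∂f.measure
        = (1/((n:ℝ)+1)) * ∫ u in Ioc a b, (f u - f a)^(n+1) ∂f.measure := by
      rw [← integral_const_mul]
      refine setIntegral_congr_fun measurableSet_Ioc (fun u hu => ?_)
      have := IH a u hu.1.le
      rw [one_mul]
      field_simp
      linarith [this]
    have hR : ∫ v in Ioc a b, (f v - f a)^n * ∫ u in Ioc v b, (1:ℝ) ∂f.measure ∂f.measure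
        = (f b - f a) * (∫ v in Ioc a b, (f v - f a)^n ∂f.measure)
          - ∫ v in Ioc a b, (f v - f a)^(n+1) ∂f.measure := by
      have h1 : ∫ v in Ioc a b, (f v - f a)^n * ∫ u in Ioc v b, (1:ℝ) ∂f.measure ∂f.measure
          = ∫ v in Ioc a b, ((f b - f a) * (f v - f a)^n - (f v - f a)^(n+1)) ∂f.measure := by
        refine setIntegral_congr_fun measurableSet_Ioc (fun v hv => ?_)
        rw [setIntegral_const, measureReal_def, f.measure_Ioc, smul_eq_mul, mul_one,
          ENNReal.toReal_ofReal (sub_nonneg.2 (f.mono hv.2))]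
        ring
      rw [h1, integral_sub (integrableIoc (p := fun v => (f b - f a) * (f v - f a)^n) (continuous_const.mul hqc) a b)
        (integrableIoc (p := fun v => (f v - f a)^(n+1)) ((hc.sub continuous_const).pow (n+1)) a b), integral_const_mul]
    rw [hL, hR] at key
    have IHab := IH a b hab
    set I := ∫ x in Ioc a b, (f x - f a)^(n+1) ∂f.measure with hI
    set J := ∫ x in Ioc a b, (f x - f a)^n ∂f.measure with hJ
    have key2 : I = ((n:ℝ)+1) * ((f b - f a) * J - I) := by
      field_simp at key
      linarith [key]
    have goal : ((n:ℝ)+1+1) * I = (f b - f a)^(n+1+1) := by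
      rw [pow_succ (f b - f a) (n+1), ← IHab]
      linear_combination key2
    simpa using goal


lemma real_exp_tsum (y : ℝ) : Real.exp y = ∑' n : ℕ, y ^ n / n ! := by
  rw [Real.exp_eq_exp_ℝ, NormedSpace.exp_eq_tsum_div]

lemma exp_sub_one_tsum (y : ℝ) : ∑' n : ℕ, y ^ (n+1) / (n+1)! = Real.exp y - 1 := by
  have hs := Real.summable_pow_div_factorial y
  have h0 := hs.tsum_eq_zero_add
  rw [real_exp_tsum y, h0]
  simp

lemma fact_succ_cast (n : ℕ) : ((n+1)! : ℝ) = ((n:ℝ)+1) * (n ! : ℝ) := by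
  rw [Nat.factorial_succ]; push_cast; ring

lemma int_exp (f : StieltjesFunction ℝ) (hc : Continuous fun x => f x) (ε : ℝ)
    (hε : ε = 1 ∨ ε = -1) (a b : ℝ) (hab : a ≤ b) :
    ∫ x in Ioc a b, Real.exp (ε * f x) ∂f.measure
      = ε * (Real.exp (ε * f b) - Real.exp (ε * f a)) := by
  have hε2 : ε * ε = 1 := by rcases hε with h | h <;> simp [h]
  have hεabs : |ε| = 1 := by rcases hε with h | h <;> simp [h]
  set c := f b - f a with hcdef
  have hc0 : 0 ≤ c := sub_nonneg.2 (f.mono hab)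
  set g : ℕ → ℝ → ℝ := fun n x => Real.exp (ε * f a) * (ε^n * (f x - f a)^n / n !) with hg
  have hser : ∀ x, Real.exp (ε * f x) = ∑' n, g n x := by
    intro x
    have h1 : ε * f x = ε * f a + ε * (f x - f a) := by ring
    rw [h1, Real.exp_add, real_exp_tsum (ε * (f x - f a)), ← tsum_mul_left]
    congr 1; ext n; rw [hg]; simp [mul_pow]
  set u : ℕ → ℝ := fun n => Real.exp (ε * f a) * (c^(n+1) / (n+1)!) with hu
  have hGint : ∀ n : ℕ, ∫ x in Ioc a b, (f x - f a)^n ∂f.measure = c^(n+1) / ((n:ℝ)+1) := by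
    intro n
    have h1 := pow_moment f hc n a b hab
    have hn : ((n:ℝ)+1) ≠ 0 := by positivity
    field_simp
    linarith [h1]
  have hgint : ∀ n : ℕ, ∫ x in Ioc a b, g n x ∂f.measure
      = Real.exp (ε * f a) * (ε^n * (c^(n+1) / (n+1)!)) := by
    intro n
    rw [hg]
    simp only []
    rw [show (fun x => Real.exp (ε * f a) * (ε^n * (f x - f a)^n / n !))
        = (fun x => (Real.exp (ε * f a) * ε^n / n !) * (f x - f a)^n) by ext x; ring]
    rw [integral_const_mul, hGint n]
    have hn : ((n:ℝ)+1) ≠ 0 := by positivity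
    have hf : ((n)! : ℝ) ≠ 0 := by positivity
    field_simp [fact_succ_cast]
    ring_nf
    rw [add_comm 1 n, fact_succ_cast]
    ring
  have hsum_u : Summable u := by
    refine Summable.of_nonneg_of_le (fun n => by positivity) ?_
      ((Real.summable_pow_div_factorial c).mul_left (Real.exp (ε * f a) * c))
    · intro n
      rw [hu]
      simp only []
      rw [fact_succ_cast, pow_succ]
      have hfn : (0:ℝ) < n ! := by positivity
      have h2 : ((n:ℝ) : ℝ) + 1 ≥ 1 := by
        have := Nat.cast_nonneg (α := ℝ) n; linarith
      calc Real.exp (ε * f a) * (c ^ n * c / (((n:ℝ)+1) * ↑n !))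
          = (Real.exp (ε * f a) * c) * (c ^ n / (((n:ℝ)+1) * ↑n !)) := by ring
        _ ≤ (Real.exp (ε * f a) * c) * (c ^ n / n !) := by
            apply mul_le_mul_of_nonneg_left _ (by positivity)
            apply div_le_div_of_nonneg_left (by positivity) hfn
            nlinarith [hfn]
  have hmeas : ∀ n : ℕ, AEStronglyMeasurable (g n) (f.measure.restrict (Ioc a b)) := by
    intro n
    exact (continuous_const.mul ((continuous_const.mul
      ((hc.sub continuous_const).pow n)).div_const _)).aestronglyMeasurable
  set G : ℕ → ℝ → ℝ := fun n x => Real.exp (ε * f a) * ((f x - f a)^n / n !) with hG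
  have hGnn : ∀ n : ℕ, ∀ x ∈ Ioc a b, 0 ≤ G n x := by
    intro n x hx
    rw [hG]
    have : 0 ≤ f x - f a := sub_nonneg.2 (f.mono hx.1.le)
    positivity
  have hnormg : ∀ n : ℕ, ∀ x ∈ Ioc a b, ‖g n x‖ = G n x := by
    intro n x hx
    rw [hg, hG]
    simp only [norm_mul, norm_div, Real.norm_eq_abs, abs_pow, hεabs, one_pow, Nat.abs_cast,
      abs_of_nonneg (Real.exp_pos (ε * (f : ℝ → ℝ) a)).le,
      abs_of_nonneg (sub_nonneg.2 (f.mono hx.1.le))]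
    ring
  have hGintval : ∀ n : ℕ, ∫ x in Ioc a b, G n x ∂f.measure = u n := by
    intro n
    rw [hG, hu]
    simp only []
    rw [show (fun x => Real.exp (ε * f a) * ((f x - f a)^n / n !))
        = (fun x => (Real.exp (ε * f a) / n !) * (f x - f a)^n) by ext x; ring]
    rw [integral_const_mul, hGint n]
    have hn : ((n:ℝ)+1) ≠ 0 := by positivity
    have hf : ((n)! : ℝ) ≠ 0 := by positivity
    field_simp [fact_succ_cast]
    ring_nf
    rw [add_comm 1 n, fact_succ_cast]
    ring
  have hlint : ∀ n : ℕ, ∫⁻ x in Ioc a b, ‖g n x‖₊ ∂f.measure = ENNReal.ofReal (u n) := by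
    intro n
    have h1 : ∫⁻ x in Ioc a b, ‖g n x‖₊ ∂f.measure
        = ∫⁻ x in Ioc a b, ENNReal.ofReal (G n x) ∂f.measure := by
      refine setLIntegral_congr_fun measurableSet_Ioc (fun x hx => ?_)
      rw [← hnormg n x hx]; exact (ofReal_norm _).symm
    rw [h1, ← ofReal_integral_eq_lintegral_ofReal]
    · rw [hGintval]
    · exact integrableIoc (continuous_const.mul
        (((hc.sub continuous_const).pow n).div_const _)) a b
    · exact (ae_restrict_iff' measurableSet_Ioc).2 (ae_of_all _ (hGnn n))
  have hne : (∑' n, ∫⁻ x in Ioc a b, ‖g n x‖₊ ∂f.measure) ≠ ⊤ := by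
    simp only [hlint]
    rw [← ENNReal.ofReal_tsum_of_nonneg (fun n => by positivity) hsum_u]
    exact ENNReal.ofReal_ne_top
  have hswap := MeasureTheory.integral_tsum hmeas hne
  have hL : ∫ x in Ioc a b, Real.exp (ε * f x) ∂f.measure
      = ∫ x in Ioc a b, ∑' n, g n x ∂f.measure := by
    congr 1; ext x; exact hser x
  rw [hL, hswap]
  simp only [hgint]
  have hw : ∀ n : ℕ, Real.exp (ε * f a) * (ε^n * (c^(n+1) / (n+1)!))
      = (ε * Real.exp (ε * f a)) * ((ε*c)^(n+1) / (n+1)!) := by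
    intro n
    have hpow : ε * ε^(n+1) = ε^n := by
      calc ε * ε^(n+1) = ε^n * (ε*ε) := by rw [pow_succ]; ring
      _ = ε^n := by rw [hε2, mul_one]
    rw [mul_pow]
    calc Real.exp (ε * f a) * (ε^n * (c^(n+1) / (n+1)!))
        = Real.exp (ε * f a) * ((ε * ε^(n+1)) * (c^(n+1) / (n+1)!)) := by rw [hpow]
      _ = (ε * Real.exp (ε * f a)) * (ε^(n+1) * c^(n+1) / (n+1)!) := by ring
  simp only [hw]
  rw [tsum_mul_left, exp_sub_one_tsum (ε * c)]
  have hfb : ε * f a + ε * c = ε * f b := by rw [hcdef]; ring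
  rw [← hfb, Real.exp_add]
  ring



lemma int_one (f : StieltjesFunction ℝ) {c d : ℝ} (h : c ≤ d) :
    ∫ _ in Ioc c d, (1:ℝ) ∂f.measure = f d - f c := by
  rw [setIntegral_const, measureReal_def, f.measure_Ioc, smul_eq_mul, mul_one,
    ENNReal.toReal_ofReal (sub_nonneg.2 (f.mono h))]

lemma exp_measure (f : StieltjesFunction ℝ) (hc : Continuous fun x => f x)
    (hm : Monotone fun x => Real.exp (f x)) (hec : Continuous fun x => Real.exp (f x)) :
    (ofCM (fun x => Real.exp (f x)) hm hec).measure
      = f.measure.withDensity (fun x => ENNReal.ofReal (Real.exp (f x))) := by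
  refine Measure.ext_of_Ioc _ _ (fun a b hab => ?_)
  rw [StieltjesFunction.measure_Ioc, withDensity_apply _ measurableSet_Ioc]
  have h1 : ∫ x in Ioc a b, Real.exp (f x) ∂f.measure = Real.exp (f b) - Real.exp (f a) := by
    have := int_exp f hc 1 (Or.inl rfl) a b hab.le
    simpa using this
  rw [← ofReal_integral_eq_lintegral_ofReal (integrableIoc hec a b)
    (ae_of_all _ (fun x => (Real.exp_pos _).le)), h1]
  rfl

lemma negexp_measure (f : StieltjesFunction ℝ) (hc : Continuous fun x => f x)
    (hm : Monotone fun x => -Real.exp (-f x)) (hec : Continuous fun x => -Real.exp (-f x)) :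
    (ofCM (fun x => -Real.exp (-f x)) hm hec).measure
      = f.measure.withDensity (fun x => ENNReal.ofReal (Real.exp (-f x))) := by
  refine Measure.ext_of_Ioc _ _ (fun a b hab => ?_)
  rw [StieltjesFunction.measure_Ioc, withDensity_apply _ measurableSet_Ioc]
  have h1 : ∫ x in Ioc a b, Real.exp (-f x) ∂f.measure = Real.exp (-f a) - Real.exp (-f b) := by
    have := int_exp f hc (-1) (Or.inr rfl) a b hab.le
    simp only [neg_one_mul] at this
    rw [this]; ring
  rw [← ofReal_integral_eq_lintegral_ofReal
    (integrableIoc (p := fun x => Real.exp (-f x)) (Continuous.rexp (hc.neg)) a b)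
    (ae_of_all _ (fun x => (Real.exp_pos _).le)), h1]
  congr 1
  show -Real.exp (-f b) - -Real.exp (-f a) = Real.exp (-f a) - Real.exp (-f b)
  ring

lemma int_withDensity (μ : Measure ℝ) {ρ g : ℝ → ℝ} (hρ : Continuous ρ) (hρ0 : ∀ x, 0 ≤ ρ x)
    (s : Set ℝ) (hs : MeasurableSet s) :
    ∫ x in s, g x ∂(μ.withDensity (fun x => ENNReal.ofReal (ρ x)))
      = ∫ x in s, ρ x * g x ∂μ := by
  rw [restrict_withDensity hs]
  have h2 : (fun x => ENNReal.ofReal (ρ x)) = (fun x => (((ρ x).toNNReal : ℝ≥0) : ℝ≥0∞)) := by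
    ext x; simp [ENNReal.ofReal]
  rw [h2, integral_withDensity_eq_integral_smul (by fun_prop : Measurable fun x => (ρ x).toNNReal)]
  refine integral_congr_ae (ae_of_all _ (fun x => ?_))
  simp [NNReal.smul_def, Real.coe_toNNReal _ (hρ0 x)]

lemma star (Λ Λh : StieltjesFunction ℝ) (hΛc : Continuous fun x => Λ x)
    (hΛhc : Continuous fun x => Λh x) (hΛ0 : Λ 0 = 0) (hΛh0 : Λh 0 = 0)
    {u : ℝ} (hu : 0 ≤ u) :
    Real.exp (Λh u - Λ u) - 1
      = (∫ x in Ioc 0 u, Real.exp (Λh x - Λ x) ∂Λh.measure)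
        - ∫ x in Ioc 0 u, Real.exp (Λh x - Λ x) ∂Λ.measure := by
  have hmA : Monotone fun x => Real.exp (Λh x) := fun x y h => Real.exp_le_exp.2 (Λh.mono h)
  have hcA : Continuous fun x => Real.exp (Λh x) := Continuous.rexp hΛhc
  have hmB : Monotone fun x => -Real.exp (-Λ x) := fun x y h => by
    have := Real.exp_le_exp.2 (neg_le_neg (Λ.mono h))
    show -Real.exp (-Λ x) ≤ -Real.exp (-Λ y)
    linarith
  have hcB : Continuous fun x => -Real.exp (-Λ x) := (Continuous.rexp hΛc.neg).neg
  set A := ofCM _ hmA hcA with hA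
  set B := ofCM _ hmB hcB with hB
  have : NullSingletonClass A.measure := noAtoms_of_cont hcA
  have : NullSingletonClass B.measure := noAtoms_of_cont hcB
  have key := fub A.measure B.measure (p := fun _ => (1:ℝ)) (q := fun _ => (1:ℝ))
    continuous_const continuous_const 0 u
  have hAioc : ∀ c d : ℝ, c ≤ d → ∫ _ in Ioc c d, (1:ℝ) ∂A.measure
      = Real.exp (Λh d) - Real.exp (Λh c) := fun c d h => by
    rw [int_one A h, hA]; simp only [ofCM_apply]
  have hBioc : ∀ c d : ℝ, c ≤ d → ∫ _ in Ioc c d, (1:ℝ) ∂B.measure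
      = Real.exp (-Λ c) - Real.exp (-Λ d) := fun c d h => by
    rw [int_one B h, hB]
    simp only [ofCM_apply]
    ring
  -- rewrite both sides
  have hL : ∫ x in Ioc 0 u, (1:ℝ) * ∫ _ in Ioc 0 x, (1:ℝ) ∂B.measure ∂A.measure
      = ∫ x in Ioc 0 u, (1 - Real.exp (-Λ x)) ∂A.measure := by
    refine setIntegral_congr_fun measurableSet_Ioc (fun x hx => ?_)
    rw [one_mul, hBioc 0 x hx.1.le, hΛ0]
    simp
  have hR : ∫ v in Ioc 0 u, (1:ℝ) * ∫ _ in Ioc v u, (1:ℝ) ∂A.measure ∂B.measure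
      = ∫ v in Ioc 0 u, (Real.exp (Λh u) - Real.exp (Λh v)) ∂B.measure := by
    refine setIntegral_congr_fun measurableSet_Ioc (fun v hv => ?_)
    rw [one_mul, hAioc v u hv.2]
  rw [hL, hR] at key
  -- expand using withDensity
  have hmeasA := exp_measure Λh hΛhc hmA hcA
  have hmeasB := negexp_measure Λ hΛc hmB hcB
  have hLL : ∫ x in Ioc 0 u, (1 - Real.exp (-Λ x)) ∂A.measure
      = ∫ x in Ioc 0 u, Real.exp (Λh x) * (1 - Real.exp (-Λ x)) ∂Λh.measure := by
    rw [hA]; rw [hmeasA]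
    exact int_withDensity _ hcA (fun x => (Real.exp_pos _).le) _ measurableSet_Ioc
  have hRR : ∫ v in Ioc 0 u, (Real.exp (Λh u) - Real.exp (Λh v)) ∂B.measure
      = ∫ v in Ioc 0 u, Real.exp (-Λ v) * (Real.exp (Λh u) - Real.exp (Λh v)) ∂Λ.measure := by
    rw [hB]; rw [hmeasB]
    exact int_withDensity _ (Continuous.rexp hΛc.neg) (fun x => (Real.exp_pos _).le) _
      measurableSet_Ioc
  rw [hLL, hRR] at key
  -- now split the integrals
  have e1 : ∫ x in Ioc 0 u, Real.exp (Λh x) * (1 - Real.exp (-Λ x)) ∂Λh.measure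
      = (∫ x in Ioc 0 u, Real.exp (Λh x) ∂Λh.measure)
        - ∫ x in Ioc 0 u, Real.exp (Λh x - Λ x) ∂Λh.measure := by
    rw [← integral_sub (integrableIoc hcA 0 u) (integrableIoc (p := fun x => Real.exp (Λh x - Λ x)) (Continuous.rexp (hΛhc.sub hΛc)) 0 u)]
    refine setIntegral_congr_fun measurableSet_Ioc (fun x hx => ?_)
    rw [Real.exp_sub, Real.exp_neg]
    field_simp
  have e2 : ∫ v in Ioc 0 u, Real.exp (-Λ v) * (Real.exp (Λh u) - Real.exp (Λh v)) ∂Λ.measure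
      = Real.exp (Λh u) * (∫ v in Ioc 0 u, Real.exp (-Λ v) ∂Λ.measure)
        - ∫ v in Ioc 0 u, Real.exp (Λh v - Λ v) ∂Λ.measure := by
    rw [← integral_const_mul, ← integral_sub
      (integrableIoc (p := fun v => Real.exp (Λh u) * Real.exp (-Λ v)) (continuous_const.mul (Continuous.rexp hΛc.neg)) 0 u)
      (integrableIoc (p := fun x => Real.exp (Λh x - Λ x)) (Continuous.rexp (hΛhc.sub hΛc)) 0 u)]
    refine setIntegral_congr_fun measurableSet_Ioc (fun v hv => ?_)
    rw [Real.exp_sub, Real.exp_neg]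
    field_simp
  rw [e1, e2] at key
  have hexpA : ∫ x in Ioc 0 u, Real.exp (Λh x) ∂Λh.measure = Real.exp (Λh u) - 1 := by
    have := int_exp Λh hΛhc 1 (Or.inl rfl) 0 u hu
    simpa [hΛh0] using this
  have hexpB : ∫ v in Ioc 0 u, Real.exp (-Λ v) ∂Λ.measure = 1 - Real.exp (-Λ u) := by
    have := int_exp Λ hΛc (-1) (Or.inr rfl) 0 u hu
    simp only [neg_one_mul] at this
    rw [this, hΛ0]; simp
  rw [hexpA, hexpB] at key
  have hfin : Real.exp (Λh u) * (1 - Real.exp (-Λ u)) = Real.exp (Λh u) - Real.exp (Λh u - Λ u) := by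
    rw [Real.exp_sub, Real.exp_neg]
    field_simp
  -- key : exp(Λh u) - 1 - ∫ H dΛh = exp(Λh u)(1 - exp(-Λ u)) - ∫ H dΛ
  rw [hfin] at key
  have : Real.exp (Λh u - Λ u) = Real.exp (Λh u) * Real.exp (-Λ u) := by
    rw [← Real.exp_add]; ring_nf
  linarith [key]


instance instFinIoc (m : Measure ℝ) [IsLocallyFiniteMeasure m] (a b : ℝ) :
    IsFiniteMeasure (m.restrict (Ioc a b)) := by
  constructor
  rw [Measure.restrict_apply_univ]
  exact (isCompact_Icc (a := a) (b := b)).measure_lt_top.trans_le'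
    (measure_mono Ioc_subset_Icc_self)

/-- Cumulative incidence difference decomposition. -/
theorem stmt10
    (τ : ℝ) (hτ : 0 < τ)
    (Λ Λh Λj Λjh : StieltjesFunction ℝ)
    (hΛc : Continuous fun x => Λ x) (hΛhc : Continuous fun x => Λh x)
    (hΛjc : Continuous fun x => Λj x) (hΛjhc : Continuous fun x => Λjh x)
    (hΛ0 : Λ 0 = 0) (hΛh0 : Λh 0 = 0) (hΛj0 : Λj 0 = 0) (hΛjh0 : Λjh 0 = 0)
    (hle : Λj.measure ≤ Λ.measure) (hleh : Λjh.measure ≤ Λh.measure)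
    (S Sh : ℝ → ℝ)
    (hS : ∀ u, S u = Real.exp (-(Λ u)))
    (hSh : ∀ u, Sh u = Real.exp (-(Λh u)))
    (F Fh : ℝ → ℝ)
    (hF : ∀ s, F s = ∫ u in Set.Ioc (0:ℝ) s, S u ∂Λj.measure)
    (hFh : ∀ s, Fh s = ∫ u in Set.Ioc (0:ℝ) s, Sh u ∂Λjh.measure)
    (t : ℝ) (ht : t ∈ Set.Icc 0 τ) :
    Fh t - F t
      = -(Fh t) * ((∫ u in Set.Ioc (0:ℝ) t, S u / Sh u ∂Λh.measure)
            - ∫ u in Set.Ioc (0:ℝ) t, S u / Sh u ∂Λ.measure)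
        + ((∫ u in Set.Ioc (0:ℝ) t, Fh u * S u / Sh u ∂Λh.measure)
            - ∫ u in Set.Ioc (0:ℝ) t, Fh u * S u / Sh u ∂Λ.measure)
        + ((∫ u in Set.Ioc (0:ℝ) t, S u ∂Λjh.measure)
            - ∫ u in Set.Ioc (0:ℝ) t, S u ∂Λj.measure) := by
  obtain ⟨ht0, htτ⟩ := ht
  have instjh : NullSingletonClass Λjh.measure := noAtoms_of_cont hΛjhc
  -- basic function facts
  have hSc : Continuous S := by
    have h : S = fun u => Real.exp (-(Λ u)) := funext hS
    rw [h]; exact Continuous.rexp hΛc.neg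
  have hShc : Continuous Sh := by
    have h : Sh = fun u => Real.exp (-(Λh u)) := funext hSh
    rw [h]; exact Continuous.rexp hΛhc.neg
  set H : ℝ → ℝ := fun u => Real.exp (Λh u - Λ u) with hHdef
  have hHc : Continuous H := Continuous.rexp (hΛhc.sub hΛc)
  have hdiv : ∀ u, S u / Sh u = H u := by
    intro u
    rw [hS, hSh, hHdef, ← Real.exp_sub]
    congr 1; ring
  have hSH : ∀ u, S u = Sh u * H u := by
    intro u
    rw [← hdiv u, hSh]
    field_simp
  have hH0 : ∀ u, 0 ≤ H u := fun u => (Real.exp_pos _).le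
  have hSh01 : ∀ u, 0 ≤ u → 0 < Sh u ∧ Sh u ≤ 1 := by
    intro u hu
    rw [hSh]
    constructor
    · exact Real.exp_pos _
    · rw [show (1:ℝ) = Real.exp 0 by simp]
      apply Real.exp_le_exp.2
      have := Λh.mono hu
      rw [hΛh0] at this
      linarith
  have hSh0 : ∀ u, 0 ≤ Sh u := fun u => by rw [hSh]; exact (Real.exp_pos _).le
  -- monotone auxiliary integrals
  set X : ℝ → ℝ := fun u => ∫ v in Ioc 0 u, H v ∂Λh.measure with hXdef
  set Y : ℝ → ℝ := fun u => ∫ v in Ioc 0 u, H v ∂Λ.measure with hYdef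
  have hXmono : Monotone X := by
    intro s s' hss
    exact setIntegral_mono_set (integrableIoc hHc 0 s') (ae_of_all _ hH0)
      (HasSubset.Subset.eventuallyLE (Ioc_subset_Ioc_right hss))
  have hYmono : Monotone Y := by
    intro s s' hss
    exact setIntegral_mono_set (integrableIoc hHc 0 s') (ae_of_all _ hH0)
      (HasSubset.Subset.eventuallyLE (Ioc_subset_Ioc_right hss))
  have hX0 : X 0 = 0 := by rw [hXdef]; simp
  have hY0 : Y 0 = 0 := by rw [hYdef]; simp
  have hXnn : ∀ u, 0 ≤ u → 0 ≤ X u := fun u hu => hX0 ▸ hXmono hu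
  have hYnn : ∀ u, 0 ≤ u → 0 ≤ Y u := fun u hu => hY0 ▸ hYmono hu
  have hFhmono : Monotone Fh := by
    intro s s' hss
    rw [hFh s, hFh s']
    exact setIntegral_mono_set (integrableIoc hShc 0 s') (ae_of_all _ hSh0)
      (HasSubset.Subset.eventuallyLE (Ioc_subset_Ioc_right hss))
  have hFh0 : Fh 0 = 0 := by rw [hFh]; simp
  have hFhnn : ∀ u, 0 ≤ u → 0 ≤ Fh u := fun u hu => hFh0 ▸ hFhmono hu
  -- integrability of the mixed products
  have hIntX : IntegrableOn (fun u => Sh u * X u) (Ioc 0 t) Λjh.measure := by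
    refine Integrable.mono' (integrable_const (X t))
      ((hShc.measurable.mul hXmono.measurable).aestronglyMeasurable) ?_
    refine (ae_restrict_iff' measurableSet_Ioc).2 (ae_of_all _ (fun u hu => ?_))
    have h1 := hSh01 u hu.1.le
    have h2 := hXnn u hu.1.le
    rw [Real.norm_eq_abs, abs_of_nonneg (mul_nonneg h1.1.le h2)]
    calc Sh u * X u ≤ 1 * X u := mul_le_mul_of_nonneg_right h1.2 h2
      _ = X u := one_mul _
      _ ≤ X t := hXmono hu.2
  have hIntY : IntegrableOn (fun u => Sh u * Y u) (Ioc 0 t) Λjh.measure := by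
    refine Integrable.mono' (integrable_const (Y t))
      ((hShc.measurable.mul hYmono.measurable).aestronglyMeasurable) ?_
    refine (ae_restrict_iff' measurableSet_Ioc).2 (ae_of_all _ (fun u hu => ?_))
    have h1 := hSh01 u hu.1.le
    have h2 := hYnn u hu.1.le
    rw [Real.norm_eq_abs, abs_of_nonneg (mul_nonneg h1.1.le h2)]
    calc Sh u * Y u ≤ 1 * Y u := mul_le_mul_of_nonneg_right h1.2 h2
      _ = Y u := one_mul _
      _ ≤ Y t := hYmono hu.2
  obtain ⟨CH, hCH⟩ : ∃ C, ∀ x ∈ Icc (0:ℝ) t, ‖H x‖ ≤ C :=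
    (isCompact_Icc.exists_bound_of_continuousOn (hHc.continuousOn))
  have hCH0 : 0 ≤ CH := (norm_nonneg _).trans (hCH 0 ⟨le_refl 0, ht0⟩)
  have hIntFhH : ∀ (m : Measure ℝ) [IsLocallyFiniteMeasure m],
      IntegrableOn (fun v => Fh v * H v) (Ioc 0 t) m := by
    intro m _
    refine Integrable.mono' (integrable_const (Fh t * CH))
      ((hFhmono.measurable.mul hHc.measurable).aestronglyMeasurable) ?_
    refine (ae_restrict_iff' measurableSet_Ioc).2 (ae_of_all _ (fun v hv => ?_))
    have h1 := hFhnn v hv.1.le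
    rw [Real.norm_eq_abs, abs_mul, abs_of_nonneg h1]
    have h2 : |H v| ≤ CH := (Real.norm_eq_abs (H v)) ▸ hCH v (Ioc_subset_Icc_self hv)
    exact mul_le_mul (hFhmono hv.2) h2 (abs_nonneg _) (hFhnn t ht0)
  -- Fh t - Fh v as integral over Ioc v t
  have hFhdiff : ∀ v ∈ Ioc (0:ℝ) t, ∫ u in Ioc v t, Sh u ∂Λjh.measure = Fh t - Fh v := by
    intro v hv
    have hsplit : Ioc (0:ℝ) v ∪ Ioc v t = Ioc (0:ℝ) t := Ioc_union_Ioc_eq_Ioc hv.1.le hv.2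
    have := setIntegral_union (Ioc_disjoint_Ioc_of_le le_rfl) measurableSet_Ioc
      (integrableIoc hShc 0 v) (integrableIoc hShc v t) (f := Sh) (μ := Λjh.measure)
    rw [hsplit] at this
    rw [hFh t, hFh v] at *
    rw [this]; ring
  -- step A : pointwise Duhamel
  have hptwise : ∀ u ∈ Ioc (0:ℝ) t, Sh u - S u = (-Sh u) * X u + Sh u * Y u := by
    intro u hu
    have hst := star Λ Λh hΛc hΛhc hΛ0 hΛh0 hu.1.le
    have hH1 : H u - 1 = X u - Y u := hst
    have h3 := hSH u
    linear_combination -h3 - Sh u * hH1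
  -- split the difference integral
  have hsplitint : ∫ u in Ioc 0 t, (Sh u - S u) ∂Λjh.measure
      = (∫ u in Ioc 0 t, (-Sh u) * X u ∂Λjh.measure)
        + ∫ u in Ioc 0 t, Sh u * Y u ∂Λjh.measure := by
    rw [← integral_add (by have h : IntegrableOn (fun u => -(Sh u * X u)) (Ioc 0 t) Λjh.measure := hIntX.neg; simp only [neg_mul]; exact h) hIntY]
    refine setIntegral_congr_fun measurableSet_Ioc (fun u hu => ?_)
    have := hptwise u hu
    simpa using this
  -- apply Fubini to each piece
  have hfub1 : ∫ u in Ioc 0 t, (-Sh u) * X u ∂Λjh.measure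
      = ∫ v in Ioc 0 t, H v * (Fh v - Fh t) ∂Λh.measure := by
    have := fub Λjh.measure Λh.measure (p := fun u => -Sh u) (q := H) hShc.neg hHc 0 t
    rw [hXdef]
    rw [this]
    refine setIntegral_congr_fun measurableSet_Ioc (fun v hv => ?_)
    rw [integral_neg, hFhdiff v hv]
    ring
  have hfub2 : ∫ u in Ioc 0 t, Sh u * Y u ∂Λjh.measure
      = ∫ v in Ioc 0 t, H v * (Fh t - Fh v) ∂Λ.measure := by
    have := fub Λjh.measure Λ.measure (p := Sh) (q := H) hShc hHc 0 t
    rw [hYdef]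
    rw [this]
    refine setIntegral_congr_fun measurableSet_Ioc (fun v hv => ?_)
    rw [hFhdiff v hv]
  -- expand the right-hand sides
  have hexp1 : ∫ v in Ioc 0 t, H v * (Fh v - Fh t) ∂Λh.measure
      = (∫ v in Ioc 0 t, Fh v * H v ∂Λh.measure) - Fh t * ∫ v in Ioc 0 t, H v ∂Λh.measure := by
    rw [← integral_const_mul, ← integral_sub (hIntFhH Λh.measure)
      (integrableIoc (p := fun v => Fh t * H v) (continuous_const.mul hHc) 0 t)]
    refine setIntegral_congr_fun measurableSet_Ioc (fun v hv => ?_)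
    ring
  have hexp2 : ∫ v in Ioc 0 t, H v * (Fh t - Fh v) ∂Λ.measure
      = Fh t * (∫ v in Ioc 0 t, H v ∂Λ.measure) - ∫ v in Ioc 0 t, Fh v * H v ∂Λ.measure := by
    rw [← integral_const_mul, ← integral_sub (integrableIoc (p := fun v => Fh t * H v) (continuous_const.mul hHc) 0 t)
      (hIntFhH Λ.measure)]
    refine setIntegral_congr_fun measurableSet_Ioc (fun v hv => ?_)
    ring
  -- convert goal integrands
  have hgoal1 : ∀ (m : Measure ℝ), (∫ u in Ioc (0:ℝ) t, S u / Sh u ∂m)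
      = ∫ u in Ioc (0:ℝ) t, H u ∂m := by
    intro m
    congr 1; ext u; exact hdiv u
  have hgoal2 : ∀ (m : Measure ℝ), (∫ u in Ioc (0:ℝ) t, Fh u * S u / Sh u ∂m)
      = ∫ u in Ioc (0:ℝ) t, Fh u * H u ∂m := by
    intro m
    congr 1; ext u; rw [mul_div_assoc, hdiv u]
  -- final difference
  have hdiffint : ∫ u in Ioc 0 t, (Sh u - S u) ∂Λjh.measure
      = (∫ u in Ioc 0 t, Sh u ∂Λjh.measure) - ∫ u in Ioc 0 t, S u ∂Λjh.measure :=
    integral_sub (integrableIoc hShc 0 t) (integrableIoc hSc 0 t)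
  rw [hfub1, hfub2, hexp1, hexp2, hdiffint] at hsplitint
  rw [hF t, hFh t, hgoal1 Λh.measure, hgoal1 Λ.measure, hgoal2 Λh.measure, hgoal2 Λ.measure]
  rw [hFh t] at hsplitint
  linarith [hsplitint]
end

section
/- Let p be a probability density on a measurable space with respect to a measure μ, and let π : X → (0,1) be measurable. Among all measurable tilting functions h : X → [0,∞) with ∫ h p dμ > 0, the ratio R(h) = ∫ (h(x)² / (π(x)(1−π(x)))) p(x) μ(dx) / ( ∫ h(x) p(x) μ(dx) )² is minimized when h(x) = c · π(x)(1 − π(x)) for some constant c > 0, and the minimum value is ( ∫ π(x)(1−π(x)) p(x) μ(dx) )^{−1}. -/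
open MeasureTheory

/-- Overlap weights minimize the homoscedastic asymptotic-variance ratio
    R(h) = ∫ h²/(π(1−π)) p dμ / (∫ h p dμ)², with minimum
    (∫ π(1−π) p dμ)⁻¹ attained at h ∝ π(1−π). -/
theorem stmt11
    {X : Type*} [MeasurableSpace X] (μ : Measure X)
    (p : X → ℝ) (hpm : Measurable p) (hp0 : ∀ x, 0 ≤ p x)
    (hp1 : ∫ x, p x ∂μ = 1)
    (π : X → ℝ) (hπm : Measurable π) (hπ : ∀ x, π x ∈ Set.Ioo (0:ℝ) 1)
    (R : (X → ℝ) → ℝ)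
    (hR : ∀ h : X → ℝ,
      R h = (∫ x, (h x) ^ 2 / (π x * (1 - π x)) * p x ∂μ)
              / (∫ x, h x * p x ∂μ) ^ 2)
    (hIπ : Integrable (fun x => π x * (1 - π x) * p x) μ)
    (hIπ2 : Integrable (fun x => (π x * (1 - π x)) ^ 2 / (π x * (1 - π x)) * p x) μ)
    (hpos : 0 < ∫ x, π x * (1 - π x) * p x ∂μ) :
    (∀ h : X → ℝ, Measurable h → (∀ x, 0 ≤ h x) →
        Integrable (fun x => h x * p x) μ →
        Integrable (fun x => (h x) ^ 2 / (π x * (1 - π x)) * p x) μ →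
        0 < ∫ x, h x * p x ∂μ →
        (∫ x, π x * (1 - π x) * p x ∂μ)⁻¹ ≤ R h)
    ∧ (∀ c : ℝ, 0 < c →
        R (fun x => c * (π x * (1 - π x)))
          = (∫ x, π x * (1 - π x) * p x ∂μ)⁻¹) := by
  have hq : ∀ x, 0 < π x * (1 - π x) := fun x =>
    mul_pos (hπ x).1 (by linarith [(hπ x).2])
  set C : ℝ := ∫ x, π x * (1 - π x) * p x ∂μ with hC
  constructor
  · intro h hhm hh0 hI1 hI2 hB
    set B : ℝ := ∫ x, h x * p x ∂μ with hBdef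
    set A : ℝ := ∫ x, (h x) ^ 2 / (π x * (1 - π x)) * p x ∂μ with hAdef
    -- Cauchy–Schwarz with f = h √(p/(π(1-π))), g = √(π(1-π) p)
    set f : X → ℝ := fun x => h x * Real.sqrt (p x / (π x * (1 - π x))) with hf
    set g : X → ℝ := fun x => Real.sqrt (π x * (1 - π x) * p x) with hg
    have hf2 : ∀ x, f x ^ 2 = (h x) ^ 2 / (π x * (1 - π x)) * p x := by
      intro x
      have : Real.sqrt (p x / (π x * (1 - π x))) ^ 2 = p x / (π x * (1 - π x)) :=
        Real.sq_sqrt (div_nonneg (hp0 x) (hq x).le)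
      rw [hf, mul_pow, this]; ring
    have hg2 : ∀ x, g x ^ 2 = π x * (1 - π x) * p x := fun x =>
      Real.sq_sqrt (mul_nonneg (hq x).le (hp0 x))
    have hfg : ∀ x, f x * g x = h x * p x := by
      intro x
      rw [hf, hg, mul_assoc, ← Real.sqrt_mul (div_nonneg (hp0 x) (hq x).le)]
      have : p x / (π x * (1 - π x)) * (π x * (1 - π x) * p x) = p x ^ 2 := by
        rw [← mul_assoc, div_mul_cancel₀ _ (hq x).ne', sq]
      rw [this, Real.sqrt_sq (hp0 x)]
    have hfm : AEStronglyMeasurable f μ :=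
      (hhm.mul ((hpm.div (hπm.mul (measurable_const.sub hπm))).sqrt)).aestronglyMeasurable
    have hgm : AEStronglyMeasurable g μ :=
      ((hπm.mul (measurable_const.sub hπm)).mul hpm).sqrt.aestronglyMeasurable
    have hfL2 : MemLp f 2 μ := by
      rw [memLp_two_iff_integrable_sq hfm]
      exact hI2.congr (Filter.Eventually.of_forall fun x => (hf2 x).symm)
    have hgL2 : MemLp g 2 μ := by
      rw [memLp_two_iff_integrable_sq hgm]
      exact hIπ.congr (Filter.Eventually.of_forall fun x => (hg2 x).symm)
    have hcs := integral_mul_le_Lp_mul_Lq_of_nonneg (Real.holderConjugate_iff.mpr ⟨one_lt_two, by norm_num⟩ : Real.HolderConjugate 2 2)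
      (Filter.Eventually.of_forall fun x =>
        mul_nonneg (hh0 x) (Real.sqrt_nonneg _))
      (Filter.Eventually.of_forall fun x => Real.sqrt_nonneg _)
      (by rw [show ENNReal.ofReal 2 = 2 by norm_num]; exact hfL2)
      (by rw [show ENNReal.ofReal 2 = 2 by norm_num]; exact hgL2)
    have hAeq : ∫ x, f x ^ 2 ∂μ = A := integral_congr_ae
      (Filter.Eventually.of_forall fun x => hf2 x)
    have hCeq : ∫ x, g x ^ 2 ∂μ = C := integral_congr_ae
      (Filter.Eventually.of_forall fun x => hg2 x)
    have hBeq : ∫ x, f x * g x ∂μ = B := integral_congr_ae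
      (Filter.Eventually.of_forall fun x => hfg x)
    rw [hBeq] at hcs
    have hA0 : 0 ≤ A := by
      rw [← hAeq]; exact integral_nonneg fun x => sq_nonneg _
    have key : B ^ 2 ≤ A * C := by
      have h1 : B ≤ A ^ ((1:ℝ)/2) * C ^ ((1:ℝ)/2) := by
        calc B ≤ (∫ x, f x ^ (2:ℝ) ∂μ) ^ ((1:ℝ)/2) * (∫ x, g x ^ (2:ℝ) ∂μ) ^ ((1:ℝ)/2) := by
              convert hcs using 4 <;> norm_num
          _ = A ^ ((1:ℝ)/2) * C ^ ((1:ℝ)/2) := by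
              congr 2
              · rw [← hAeq]; congr 1; ext x; rw [← Real.rpow_natCast (f x) 2]; norm_num
              · rw [← hCeq]; congr 1; ext x; rw [← Real.rpow_natCast (g x) 2]; norm_num
      have h2 : B ^ 2 ≤ (A ^ ((1:ℝ)/2) * C ^ ((1:ℝ)/2)) ^ 2 :=
        pow_le_pow_left₀ hB.le h1 2
      calc B ^ 2 ≤ (A ^ ((1:ℝ)/2) * C ^ ((1:ℝ)/2)) ^ 2 := h2
        _ = A * C := by
            rw [mul_pow, ← Real.rpow_natCast (A ^ ((1:ℝ)/2)) 2,
              ← Real.rpow_natCast (C ^ ((1:ℝ)/2)) 2,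
              ← Real.rpow_mul hA0, ← Real.rpow_mul hpos.le]
            norm_num
    rw [hR h]
    show C⁻¹ ≤ A / B ^ 2
    rw [le_div_iff₀ (pow_pos hB 2), inv_mul_le_iff₀ hpos]
    linarith
  · intro c hc
    have hpt : ∀ x, (c * (π x * (1 - π x))) ^ 2 / (π x * (1 - π x)) * p x
        = c ^ 2 * ((π x * (1 - π x)) ^ 2 / (π x * (1 - π x)) * p x) := by
      intro x; field_simp
    have hpt2 : ∀ x, (π x * (1 - π x)) ^ 2 / (π x * (1 - π x)) * p x
        = π x * (1 - π x) * p x := by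
      intro x
      rw [sq, mul_div_assoc, div_self (hq x).ne', mul_one]
    rw [hR]
    have hnum : ∫ x, (c * (π x * (1 - π x))) ^ 2 / (π x * (1 - π x)) * p x ∂μ
        = c ^ 2 * C := by
      rw [show (fun x => (c * (π x * (1 - π x))) ^ 2 / (π x * (1 - π x)) * p x)
          = fun x => c ^ 2 * ((π x * (1 - π x)) ^ 2 / (π x * (1 - π x)) * p x)
          from funext hpt, integral_const_mul _ _]
      congr 1
      exact integral_congr_ae (Filter.Eventually.of_forall fun x => hpt2 x)
    have hden : ∫ x, c * (π x * (1 - π x)) * p x ∂μ = c * C := by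
      rw [show (fun x => c * (π x * (1 - π x)) * p x)
          = fun x => c * (π x * (1 - π x) * p x) from funext fun x => by ring,
        integral_const_mul _ _]
    rw [hnum, hden]
    rw [mul_pow]
    rw [show c ^ 2 * C / (c ^ 2 * C ^ 2) = C⁻¹ by
      field_simp]
end
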